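/- arXiv:1502.06695 — 7 statements merged into one kernel-verified Lean document; each statement's English description precedes it below -/
import Mathlib

section
/- Assume f_0 = 1 and set m = n(L−1). Define P_0^{(0)}(w) := det of the (m+1)×(m+1) matrix with first row (1, w, …, w^m) and remaining rows the stacked blocks A^1_m(n,m+1), …, A^{L−1}_m(n,m+1); and, for 1 ≤ j ≤ L−1, P_0^{(j)}(w) := det of the m×m matrix with first row (1, w, …, w^{m−1}) and remaining rows the stacked blocks A^1_m(n,m), …, A^{j−1}_m(n,m), A^j_m(n−1,m), A^{j+1}_{m−1}(n,m), …, A^{L−1}_{m−1}(n,m). Define further P_i^{(0)} := [f_i·P_0^{(0)}]_0^{m−1} for 1 ≤ i ≤ L−1, and for 1 ≤ j ≤ L−1: P_i^{(j)} := [f_i·P_0^{(j)}]_0^{m−1} for 1 ≤ i ≤ j−1, P_j^{(j)} := w·[f_j·P_0^{(j)}]_0^{m−1}, and P_i^{(j)} := w·[f_i·P_0^{(j)}]_0^{m−2} for j+1 ≤ i ≤ L−1. Then the tuple (P_i^{(j)}) is a solution of the simultaneous Padé approximation problem for (1, f_1, …, f_{L−1}): deg P_i^{(j)} ≤ m−1+δ_{ij},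 P_i^{(0)} − f_iP_0^{(0)} = O(w^{nL}) for 1 ≤ i ≤ L−1, and for 1 ≤ j ≤ L−1, P_i^{(j)} − f_iP_0^{(j)} = O(w^{nL}) for 1 ≤ i ≤ j−1 and P_i^{(j)} − f_i·wP_0^{(j)} = O(w^{nL}) for j ≤ i ≤ L−1. -/
noncomputable section

/-- `g = O(w^N)`: the coefficients of `w^0, …, w^{N-1}` in `g` vanish. -/
def bigOh (g : PowerSeries ℂ) (N : ℕ) : Prop := ∀ k < N, PowerSeries.coeff k g = 0

/-- The coefficient sequence of a power series, extended by `0` to negative indices. -/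
def aext (f : PowerSeries ℂ) : ℤ → ℂ :=
  fun j => if 0 ≤ j then PowerSeries.coeff j.toNat f else 0

/-- `P_0^{(0)}(w)`: the determinant of the `(m+1) × (m+1)` matrix with first row
`(1, w, …, w^m)` and remaining rows the stacked blocks `A^1_m(n,m+1), …, A^{L-1}_m(n,m+1)`,
where `m = n(L-1)`. -/
def P00 (L n : ℕ) (a : ℕ → ℤ → ℂ) : Polynomial ℂ :=
  Matrix.det (Matrix.of fun r c : Fin (n * (L - 1) + 1) =>
    if (r : ℕ) = 0 then Polynomial.X ^ (c : ℕ)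
    else Polynomial.C (a (((r : ℕ) - 1) / n + 1)
      (((n * (L - 1) : ℕ) : ℤ) + (((((r : ℕ) - 1) % n : ℕ)) : ℤ) - ((c : ℕ) : ℤ))))

/-- `P_0^{(j)}(w)` for `1 ≤ j ≤ L-1`: the determinant of the `m × m` matrix with first
row `(1, w, …, w^{m-1})` and remaining rows the stacked blocks
`A^1_m(n,m), …, A^{j-1}_m(n,m), A^j_m(n-1,m), A^{j+1}_{m-1}(n,m), …, A^{L-1}_{m-1}(n,m)`. -/
def P0j (L n j : ℕ) (a : ℕ → ℤ → ℂ) : Polynomial ℂ :=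
  Matrix.det (Matrix.of fun r c : Fin (n * (L - 1)) =>
    if (r : ℕ) = 0 then Polynomial.X ^ (c : ℕ)
    else Polynomial.C (
      if (r : ℕ) - 1 < (j - 1) * n then
        a (((r : ℕ) - 1) / n + 1)
          (((n * (L - 1) : ℕ) : ℤ) + (((((r : ℕ) - 1) % n : ℕ)) : ℤ) - ((c : ℕ) : ℤ))
      else if (r : ℕ) - 1 < j * n - 1 then
        a j (((n * (L - 1) : ℕ) : ℤ) + ((((r : ℕ) - 1 - (j - 1) * n : ℕ)) : ℤ) - ((c : ℕ) : ℤ))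
      else
        a ((((r : ℕ) - 1 - (j * n - 1)) / n) + j + 1)
          (((n * (L - 1) : ℕ) : ℤ) - 1 +
            (((((r : ℕ) - 1 - (j * n - 1)) % n : ℕ)) : ℤ) - ((c : ℕ) : ℤ))))

/-- The determinant-defined simultaneous Padé polynomials `P_i^{(j)}` (here `Ppoly L n f j i`),
obtained from `P_0^{(j)}` by taking sections of the products `f_i · P_0^{(j)}`. -/
def Ppoly (L n : ℕ) (f : ℕ → PowerSeries ℂ) (j i : ℕ) : Polynomial ℂ :=
  if j = 0 then
    (if i = 0 then P00 L n (fun k => aext (f k))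
     else PowerSeries.trunc (n * (L - 1))
        (f i * ((P00 L n (fun k => aext (f k)) : Polynomial ℂ) : PowerSeries ℂ)))
  else
    (if i = 0 then P0j L n j (fun k => aext (f k))
     else if i < j then
       PowerSeries.trunc (n * (L - 1))
         (f i * ((P0j L n j (fun k => aext (f k)) : Polynomial ℂ) : PowerSeries ℂ))
     else if i = j then
       Polynomial.X * PowerSeries.trunc (n * (L - 1))
         (f j * ((P0j L n j (fun k => aext (f k)) : Polynomial ℂ) : PowerSeries ℂ))
     else
       Polynomial.X * PowerSeries.trunc (n * (L - 1) - 1)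
         (f i * ((P0j L n j (fun k => aext (f k)) : Polynomial ℂ) : PowerSeries ℂ)))


open Polynomial

/-! ### Auxiliary machinery -/

lemma det_map (Nn : ℕ) (hN : 0 < Nn) (T : Polynomial ℂ →ₗ[ℂ] ℂ) (E : ℕ → ℕ → ℂ) :
    T (Matrix.det (Matrix.of fun r c : Fin Nn =>
      if (r : ℕ) = 0 then (Polynomial.X : Polynomial ℂ) ^ (c : ℕ)
      else Polynomial.C (E (r : ℕ) (c : ℕ))))
    = Matrix.det (Matrix.of fun r c : Fin Nn =>
      if (r : ℕ) = 0 then T ((Polynomial.X : Polynomial ℂ) ^ (c : ℕ))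
      else E (r : ℕ) (c : ℕ)) := by
  rw [Matrix.det_apply, Matrix.det_apply, map_sum]
  refine Finset.sum_congr rfl fun σ _ => ?_
  have hz : ((⟨0, hN⟩ : Fin Nn) : ℕ) = 0 := rfl
  set z : Fin Nn := ⟨0, hN⟩ with hzdef
  set i₀ := σ⁻¹ z with hi₀
  have hσi₀ : σ i₀ = z := σ.apply_symm_apply z
  have hne : ∀ i ∈ Finset.univ.erase i₀, ((σ i : Fin Nn) : ℕ) ≠ 0 := by
    intro i hi hcon
    exact Finset.ne_of_mem_erase hi
      (σ.injective ((Fin.ext (by simpa using hcon) : σ i = z).trans hσi₀.symm))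
  have herase : ∀ i ∈ Finset.univ.erase i₀,
      (Matrix.of fun r c : Fin Nn =>
        if (r : ℕ) = 0 then (Polynomial.X : Polynomial ℂ) ^ (c : ℕ)
        else Polynomial.C (E (r : ℕ) (c : ℕ))) (σ i) i
      = Polynomial.C (E ((σ i : Fin Nn) : ℕ) (i : ℕ)) := by
    intro i hi
    simp only [Matrix.of_apply, if_neg (hne i hi)]
  have herase' : ∀ i ∈ Finset.univ.erase i₀,
      (Matrix.of fun r c : Fin Nn =>
        if (r : ℕ) = 0 then T ((Polynomial.X : Polynomial ℂ) ^ (c : ℕ))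
        else E (r : ℕ) (c : ℕ)) (σ i) i
      = E ((σ i : Fin Nn) : ℕ) (i : ℕ) := by
    intro i hi
    simp only [Matrix.of_apply, if_neg (hne i hi)]
  have key : (∏ i, (Matrix.of fun r c : Fin Nn =>
      if (r : ℕ) = 0 then (Polynomial.X : Polynomial ℂ) ^ (c : ℕ)
      else Polynomial.C (E (r : ℕ) (c : ℕ))) (σ i) i)
      = (∏ i ∈ Finset.univ.erase i₀, E ((σ i : Fin Nn) : ℕ) (i : ℕ)) •
        ((Polynomial.X : Polynomial ℂ) ^ (i₀ : ℕ)) := by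
    rw [← Finset.mul_prod_erase Finset.univ _ (Finset.mem_univ i₀),
      Finset.prod_congr rfl herase, ← map_prod]
    simp only [Matrix.of_apply, hσi₀, hz, if_pos]
    rw [smul_eq_C_mul, mul_comm]
  have key' : (∏ i, (Matrix.of fun r c : Fin Nn =>
      if (r : ℕ) = 0 then T ((Polynomial.X : Polynomial ℂ) ^ (c : ℕ))
      else E (r : ℕ) (c : ℕ)) (σ i) i)
      = (∏ i ∈ Finset.univ.erase i₀, E ((σ i : Fin Nn) : ℕ) (i : ℕ)) •
        T ((Polynomial.X : Polynomial ℂ) ^ (i₀ : ℕ)) := by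
    rw [← Finset.mul_prod_erase Finset.univ _ (Finset.mem_univ i₀),
      Finset.prod_congr rfl herase']
    simp only [Matrix.of_apply, hσi₀, hz, if_pos]
    rw [smul_eq_mul, mul_comm]
  rw [key, key', Units.smul_def, Units.smul_def, map_zsmul, map_smul]

def Tmap (f : PowerSeries ℂ) (k : ℕ) : Polynomial ℂ →ₗ[ℂ] ℂ where
  toFun p := PowerSeries.coeff k (f * (p : PowerSeries ℂ))
  map_add' p q := by
    simp only [Polynomial.coe_add, mul_add, map_add]
  map_smul' c p := by
    simp only [RingHom.id_apply]
    rw [show ((c • p : Polynomial ℂ) : PowerSeries ℂ) = c • (p : PowerSeries ℂ) by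
      rw [smul_eq_C_mul, Polynomial.coe_mul, Polynomial.coe_C, PowerSeries.smul_eq_C_mul]]
    rw [mul_smul_comm, map_smul, smul_eq_mul]

lemma Tmap_X_pow (f : PowerSeries ℂ) (k c : ℕ) :
    Tmap f k ((Polynomial.X : Polynomial ℂ) ^ c)
      = aext f ((k : ℤ) - (c : ℤ)) := by
  show PowerSeries.coeff k (f * _) = _
  rw [Polynomial.coe_pow, Polynomial.coe_X, PowerSeries.coeff_mul_X_pow', aext]
  by_cases h : c ≤ k
  · rw [if_pos h, if_pos (by omega : (0:ℤ) ≤ (k:ℤ) - (c:ℤ))]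
    have : ((k : ℤ) - (c : ℤ)).toNat = k - c := by omega
    rw [this]
  · rw [if_neg h, if_neg (by omega : ¬ (0:ℤ) ≤ (k:ℤ) - (c:ℤ))]

lemma deg_helper (d : WithBot ℕ) (t : ℕ) (h : d < (t : WithBot ℕ)) :
    1 + d ≤ (t : WithBot ℕ) := by
  induction d using WithBot.recBotCoe with
  | bot => simp
  | coe k =>
    have hk : k < t := by
      rw [Nat.cast_withBot] at h
      exact WithBot.coe_lt_coe.mp h
    have h2 : ((1 + k : ℕ) : WithBot ℕ) ≤ ((t : ℕ) : WithBot ℕ) := by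
      rw [Nat.cast_withBot, Nat.cast_withBot]
      exact WithBot.coe_le_coe.mpr (by omega)
    rw [Nat.cast_add, Nat.cast_one] at h2
    exact h2

lemma deg_helper2 (d : WithBot ℕ) (t : ℕ) (h : d < (t : WithBot ℕ)) :
    d ≤ ((t - 1 : ℕ) : WithBot ℕ) := by
  induction d using WithBot.recBotCoe with
  | bot => simp
  | coe k =>
    have hk : k < t := by
      rw [Nat.cast_withBot] at h
      exact WithBot.coe_lt_coe.mp h
    rw [Nat.cast_withBot]
    exact WithBot.coe_le_coe.mpr (by omega)

lemma wb_lt (a b : ℕ) : (a : WithBot ℕ) < (b : WithBot ℕ) ↔ a < b := by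
  rw [Nat.cast_withBot, Nat.cast_withBot]
  exact WithBot.coe_lt_coe

/-! ### Vanishing of high coefficients (degree bounds) -/

lemma P00_coeff_high (L n : ℕ) (hL : 2 ≤ L) (hn : 0 < n) (a : ℕ → ℤ → ℂ)
    (k : ℕ) (hk : n * (L - 1) < k) : (P00 L n a).coeff k = 0 := by
  rw [← Polynomial.lcoeff_apply]
  have h2 := det_map (n * (L - 1) + 1) (by omega) (Polynomial.lcoeff ℂ k)
    (fun r c => a ((r - 1) / n + 1)
      (((n * (L - 1) : ℕ) : ℤ) + (((r - 1) % n : ℕ) : ℤ) - (c : ℤ)))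
  rw [P00, h2]
  apply Matrix.det_eq_zero_of_row_eq_zero (⟨0, by omega⟩ : Fin (n * (L - 1) + 1))
  intro c
  have hc := c.isLt
  simp only [Matrix.of_apply]
  rw [if_pos trivial, Polynomial.lcoeff_apply, Polynomial.coeff_X_pow,
    if_neg (by omega : ¬ (k = (c : ℕ)))]

lemma P0j_coeff_high (L n j : ℕ) (hL : 2 ≤ L) (hn : 0 < n) (a : ℕ → ℤ → ℂ)
    (k : ℕ) (hk : n * (L - 1) ≤ k) : (P0j L n j a).coeff k = 0 := by
  have hm0 : 0 < n * (L - 1) := Nat.mul_pos hn (by omega)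
  rw [← Polynomial.lcoeff_apply]
  have h2 := det_map (n * (L - 1)) hm0 (Polynomial.lcoeff ℂ k)
    (fun r c =>
      if r - 1 < (j - 1) * n then
        a ((r - 1) / n + 1)
          (((n * (L - 1) : ℕ) : ℤ) + (((r - 1) % n : ℕ) : ℤ) - (c : ℤ))
      else if r - 1 < j * n - 1 then
        a j (((n * (L - 1) : ℕ) : ℤ) + (((r - 1 - (j - 1) * n : ℕ)) : ℤ) - (c : ℤ))
      else
        a ((r - 1 - (j * n - 1)) / n + j + 1)
          (((n * (L - 1) : ℕ) : ℤ) - 1 + (((r - 1 - (j * n - 1)) % n : ℕ) : ℤ) - (c : ℤ)))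
  rw [P0j, h2]
  apply Matrix.det_eq_zero_of_row_eq_zero (⟨0, hm0⟩ : Fin (n * (L - 1)))
  intro c
  have hc := c.isLt
  simp only [Matrix.of_apply]
  rw [if_pos trivial, Polynomial.lcoeff_apply, Polynomial.coeff_X_pow,
    if_neg (by omega : ¬ (k = (c : ℕ)))]

/-! ### Vanishing of the middle coefficients of `f_i · P` -/

lemma coeff_fP00 (L n : ℕ) (hL : 2 ≤ L) (hn : 0 < n) (f : ℕ → PowerSeries ℂ)
    (i s : ℕ) (hi1 : 1 ≤ i) (hiL : i < L) (hs : s < n) :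
    PowerSeries.coeff (n * (L - 1) + s)
      (f i * ((P00 L n (fun k => aext (f k)) : Polynomial ℂ) : PowerSeries ℂ)) = 0 := by
  set m := n * (L - 1) with hm
  set k := m + s with hk
  obtain ⟨i', rfl⟩ : ∃ i', i = i' + 1 := ⟨i - 1, by omega⟩
  have hmul : i' * n + n = (i' + 1) * n := by ring
  have hmul2 : (i' + 1) * n ≤ (L - 1) * n := Nat.mul_le_mul_right n (by omega)
  have hmul3 : (L - 1) * n = m := by rw [hm, Nat.mul_comm]
  have hrlt : i' * n + s + 1 < m + 1 := by omega
  have h1 : PowerSeries.coeff k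
      (f (i' + 1) * ((P00 L n (fun k => aext (f k)) : Polynomial ℂ) : PowerSeries ℂ))
      = Tmap (f (i' + 1)) k (P00 L n (fun k => aext (f k))) := rfl
  rw [h1]
  have h2 := det_map (m + 1) (by omega) (Tmap (f (i' + 1)) k)
    (fun r c => aext (f ((r - 1) / n + 1))
      ((m : ℤ) + (((r - 1) % n : ℕ) : ℤ) - (c : ℤ)))
  rw [P00, h2]
  apply Matrix.det_zero_of_row_eq (i := (⟨0, by omega⟩ : Fin (m + 1)))
    (j := (⟨i' * n + s + 1, hrlt⟩ : Fin (m + 1)))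
  · intro hcon
    have := congrArg Fin.val hcon
    simp at this
  · funext c
    simp only [Matrix.of_apply]
    rw [if_pos (by simp), if_neg (by omega : ¬ (i' * n + s + 1 = 0))]
    have hd : (i' * n + s + 1 - 1) = i' * n + s := by omega
    have hdiv : (i' * n + s) / n = i' := by
      rw [mul_comm, Nat.mul_add_div hn, Nat.div_eq_of_lt hs, add_zero]
    have hmod : (i' * n + s) % n = s := by
      rw [mul_comm, Nat.mul_add_mod, Nat.mod_eq_of_lt hs]
    rw [Tmap_X_pow]
    simp only [hd, hdiv, hmod]
    congr 1

lemma coeff_fP0j_lt (L n j i s : ℕ) (hL : 2 ≤ L) (hn : 0 < n) (f : ℕ → PowerSeries ℂ)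
    (hi1 : 1 ≤ i) (hij : i < j) (hjL : j < L) (hs : s < n) :
    PowerSeries.coeff (n * (L - 1) + s)
      (f i * ((P0j L n j (fun k => aext (f k)) : Polynomial ℂ) : PowerSeries ℂ)) = 0 := by
  set m := n * (L - 1) with hm
  set k := m + s with hk
  have hm0 : 0 < m := Nat.mul_pos hn (by omega)
  obtain ⟨i', rfl⟩ : ∃ i', i = i' + 1 := ⟨i - 1, by omega⟩
  have hmul : i' * n + n = (i' + 1) * n := by ring
  have hmul2 : (i' + 1) * n ≤ (j - 1) * n := Nat.mul_le_mul_right n (by omega)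
  have hmulC : (j - 1) * n ≤ (L - 2) * n := Nat.mul_le_mul_right n (by omega)
  have hmulD : (L - 2) * n + n = (L - 1) * n := by
    have h : L - 2 + 1 = L - 1 := by omega
    calc (L - 2) * n + n = ((L - 2) + 1) * n := by ring
      _ = (L - 1) * n := by rw [h]
  have hmul3 : (L - 1) * n = m := by rw [hm, Nat.mul_comm]
  have hrlt : i' * n + s + 1 < m := by omega
  have h1 : PowerSeries.coeff k
      (f (i' + 1) * ((P0j L n j (fun k => aext (f k)) : Polynomial ℂ) : PowerSeries ℂ))
      = Tmap (f (i' + 1)) k (P0j L n j (fun k => aext (f k))) := rfl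
  rw [h1]
  have h2 := det_map m hm0 (Tmap (f (i' + 1)) k)
    (fun r c =>
      if r - 1 < (j - 1) * n then
        aext (f ((r - 1) / n + 1))
          ((m : ℤ) + (((r - 1) % n : ℕ) : ℤ) - (c : ℤ))
      else if r - 1 < j * n - 1 then
        aext (f j) ((m : ℤ) + (((r - 1 - (j - 1) * n : ℕ)) : ℤ) - (c : ℤ))
      else
        aext (f ((r - 1 - (j * n - 1)) / n + j + 1))
          ((m : ℤ) - 1 + (((r - 1 - (j * n - 1)) % n : ℕ) : ℤ) - (c : ℤ)))
  rw [P0j, h2]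
  apply Matrix.det_zero_of_row_eq (i := (⟨0, hm0⟩ : Fin m))
    (j := (⟨i' * n + s + 1, hrlt⟩ : Fin m))
  · intro hcon
    have := congrArg Fin.val hcon
    simp at this
  · funext c
    simp only [Matrix.of_apply]
    rw [if_pos (by simp), if_neg (by omega : ¬ (i' * n + s + 1 = 0))]
    have hd : (i' * n + s + 1 - 1) = i' * n + s := by omega
    have hdiv : (i' * n + s) / n = i' := by
      rw [mul_comm, Nat.mul_add_div hn, Nat.div_eq_of_lt hs, add_zero]
    have hmod : (i' * n + s) % n = s := by
      rw [mul_comm, Nat.mul_add_mod, Nat.mod_eq_of_lt hs]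
    simp only [hd]
    rw [if_pos (by omega : i' * n + s < (j - 1) * n)]
    rw [Tmap_X_pow]
    simp only [hdiv, hmod]
    congr 1

lemma coeff_fP0j_eq (L n j s : ℕ) (hL : 2 ≤ L) (hn : 0 < n) (f : ℕ → PowerSeries ℂ)
    (hj1 : 1 ≤ j) (hjL : j < L) (hs : s + 1 < n) :
    PowerSeries.coeff (n * (L - 1) + s)
      (f j * ((P0j L n j (fun k => aext (f k)) : Polynomial ℂ) : PowerSeries ℂ)) = 0 := by
  set m := n * (L - 1) with hm
  set k := m + s with hk
  have hm0 : 0 < m := Nat.mul_pos hn (by omega)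
  obtain ⟨j', rfl⟩ : ∃ j', j = j' + 1 := ⟨j - 1, by omega⟩
  have hmul : j' * n + n = (j' + 1) * n := by ring
  have hmul2 : (j' + 1) * n ≤ (L - 1) * n := Nat.mul_le_mul_right n (by omega)
  have hmul3 : (L - 1) * n = m := by rw [hm, Nat.mul_comm]
  have hrlt : j' * n + s + 1 < m := by omega
  have h1 : PowerSeries.coeff k
      (f (j' + 1) * ((P0j L n (j' + 1) (fun k => aext (f k)) : Polynomial ℂ) : PowerSeries ℂ))
      = Tmap (f (j' + 1)) k (P0j L n (j' + 1) (fun k => aext (f k))) := rfl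
  rw [h1]
  have h2 := det_map m hm0 (Tmap (f (j' + 1)) k)
    (fun r c =>
      if r - 1 < (j' + 1 - 1) * n then
        aext (f ((r - 1) / n + 1))
          ((m : ℤ) + (((r - 1) % n : ℕ) : ℤ) - (c : ℤ))
      else if r - 1 < (j' + 1) * n - 1 then
        aext (f (j' + 1)) ((m : ℤ) + (((r - 1 - (j' + 1 - 1) * n : ℕ)) : ℤ) - (c : ℤ))
      else
        aext (f ((r - 1 - ((j' + 1) * n - 1)) / n + (j' + 1) + 1))
          ((m : ℤ) - 1 + (((r - 1 - ((j' + 1) * n - 1)) % n : ℕ) : ℤ) - (c : ℤ)))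
  rw [P0j, h2]
  apply Matrix.det_zero_of_row_eq (i := (⟨0, hm0⟩ : Fin m))
    (j := (⟨j' * n + s + 1, hrlt⟩ : Fin m))
  · intro hcon
    have := congrArg Fin.val hcon
    simp at this
  · funext c
    simp only [Matrix.of_apply]
    rw [if_pos (by simp), if_neg (by omega : ¬ (j' * n + s + 1 = 0))]
    simp only [Nat.add_sub_cancel]
    rw [if_neg (by omega : ¬ (j' * n + s < j' * n)),
      if_pos (by omega : j' * n + s < (j' + 1) * n - 1)]
    have hsub : j' * n + s - j' * n = s := by omega
    simp only [hsub]
    rw [Tmap_X_pow]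
    congr 1

lemma coeff_fP0j_gt (L n j i s : ℕ) (hL : 2 ≤ L) (hn : 0 < n) (f : ℕ → PowerSeries ℂ)
    (hj1 : 1 ≤ j) (hji : j < i) (hiL : i < L) (hs : s < n) :
    PowerSeries.coeff (n * (L - 1) - 1 + s)
      (f i * ((P0j L n j (fun k => aext (f k)) : Polynomial ℂ) : PowerSeries ℂ)) = 0 := by
  set m := n * (L - 1) with hm
  set k := m - 1 + s with hk
  have hm0 : 0 < m := Nat.mul_pos hn (by omega)
  obtain ⟨i', rfl⟩ : ∃ i', i = i' + 1 := ⟨i - 1, by omega⟩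
  have hji' : j ≤ i' := by omega
  have hmul : i' * n + n = (i' + 1) * n := by ring
  have hmul2 : (i' + 1) * n ≤ (L - 1) * n := Nat.mul_le_mul_right n (by omega)
  have hmul3 : (L - 1) * n = m := by rw [hm, Nat.mul_comm]
  have hE : j * n ≤ i' * n := Nat.mul_le_mul_right n hji'
  have hF : (j - 1) * n + n = j * n := by
    have h : j - 1 + 1 = j := by omega
    calc (j - 1) * n + n = ((j - 1) + 1) * n := by ring
      _ = j * n := by rw [h]
  have hnj : n ≤ j * n := Nat.le_mul_of_pos_left n (by omega)
  have hni : n ≤ i' * n := Nat.le_mul_of_pos_left n (by omega)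
  have hH : ((i' - j) + j) * n = i' * n := by rw [Nat.sub_add_cancel hji']
  have hH' : (i' - j) * n + j * n = i' * n := by rw [← hH]; ring
  have hrlt : i' * n + s < m := by omega
  have h1 : PowerSeries.coeff k
      (f (i' + 1) * ((P0j L n j (fun k => aext (f k)) : Polynomial ℂ) : PowerSeries ℂ))
      = Tmap (f (i' + 1)) k (P0j L n j (fun k => aext (f k))) := rfl
  rw [h1]
  have h2 := det_map m hm0 (Tmap (f (i' + 1)) k)
    (fun r c =>
      if r - 1 < (j - 1) * n then
        aext (f ((r - 1) / n + 1))
          ((m : ℤ) + (((r - 1) % n : ℕ) : ℤ) - (c : ℤ))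
      else if r - 1 < j * n - 1 then
        aext (f j) ((m : ℤ) + (((r - 1 - (j - 1) * n : ℕ)) : ℤ) - (c : ℤ))
      else
        aext (f ((r - 1 - (j * n - 1)) / n + j + 1))
          ((m : ℤ) - 1 + (((r - 1 - (j * n - 1)) % n : ℕ) : ℤ) - (c : ℤ)))
  rw [P0j, h2]
  apply Matrix.det_zero_of_row_eq (i := (⟨0, hm0⟩ : Fin m))
    (j := (⟨i' * n + s, hrlt⟩ : Fin m))
  · intro hcon
    have := congrArg Fin.val hcon
    simp at this
    omega
  · funext c
    simp only [Matrix.of_apply]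
    rw [if_pos (by simp), if_neg (by omega : ¬ (i' * n + s = 0))]
    rw [if_neg (by omega : ¬ (i' * n + s - 1 < (j - 1) * n)),
      if_neg (by omega : ¬ (i' * n + s - 1 < j * n - 1))]
    have hG : i' * n + s - 1 - (j * n - 1) = (i' - j) * n + s := by omega
    have hdiv : ((i' - j) * n + s) / n = i' - j := by
      rw [mul_comm, Nat.mul_add_div hn, Nat.div_eq_of_lt hs, add_zero]
    have hmod : ((i' - j) * n + s) % n = s := by
      rw [mul_comm, Nat.mul_add_mod, Nat.mod_eq_of_lt hs]
    have hidx : i' - j + j + 1 = i' + 1 := by omega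
    simp only [hG, hdiv, hmod, hidx]
    rw [Tmap_X_pow]
    congr 1
    omega

/-- The determinant-defined polynomials solve the simultaneous Padé approximation
problem for `(1, f_1, …, f_{L-1})`. -/
theorem detP_solves_SP (L n : ℕ) (hL : 2 ≤ L) (hn : 0 < n)
    (f : ℕ → PowerSeries ℂ) (hf0 : f 0 = 1) :
    (∀ j < L, ∀ i < L, (Ppoly L n f j i).degree ≤
        ((n * (L - 1) - 1 + if i = j then 1 else 0 : ℕ) : WithBot ℕ)) ∧
    (∀ i, 1 ≤ i → i < L →
      bigOh (((Ppoly L n f 0 i : Polynomial ℂ) : PowerSeries ℂ)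
        - f i * ((Ppoly L n f 0 0 : Polynomial ℂ) : PowerSeries ℂ)) (n * L)) ∧
    (∀ j i, 1 ≤ j → j < L → 1 ≤ i → i < j →
      bigOh (((Ppoly L n f j i : Polynomial ℂ) : PowerSeries ℂ)
        - f i * ((Ppoly L n f j 0 : Polynomial ℂ) : PowerSeries ℂ)) (n * L)) ∧
    (∀ j i, 1 ≤ j → j < L → j ≤ i → i < L →
      bigOh (((Ppoly L n f j i : Polynomial ℂ) : PowerSeries ℂ)
        - f i * (PowerSeries.X *
            ((Ppoly L n f j 0 : Polynomial ℂ) : PowerSeries ℂ))) (n * L)) := by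
  have hm0 : 0 < n * (L - 1) := Nat.mul_pos hn (by omega)
  have hnL : n * L = n * (L - 1) + n := by
    have h : L - 1 + 1 = L := by omega
    calc n * L = n * ((L - 1) + 1) := by rw [h]
      _ = n * (L - 1) + n := by ring
  refine ⟨?_, ?_, ?_, ?_⟩
  · -- degree bounds
    intro j hj i hi
    by_cases hj0 : j = 0
    · subst hj0
      by_cases hi0 : i = 0
      · subst hi0
        rw [Ppoly, if_pos rfl, if_pos rfl, if_pos rfl]
        have hdeg : (P00 L n (fun k => aext (f k))).degree
            ≤ ((n * (L - 1) : ℕ) : WithBot ℕ) := by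
          rw [Polynomial.degree_le_iff_coeff_zero]
          intro t ht
          exact P00_coeff_high L n hL hn _ t ((wb_lt _ _).mp ht)
        have he : (n * (L - 1) - 1 + 1 : ℕ) = n * (L - 1) := by omega
        rw [he]
        exact hdeg
      · rw [Ppoly, if_pos rfl, if_neg hi0, if_neg hi0]
        have h := PowerSeries.degree_trunc_lt
          (f i * ((P00 L n fun k => aext (f k) : Polynomial ℂ) : PowerSeries ℂ)) (n * (L - 1))
        have h2 := deg_helper2 _ _ h
        simpa using h2
    · rw [Ppoly, if_neg hj0]
      by_cases hi0 : i = 0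
      · subst hi0
        rw [if_pos rfl, if_neg (by omega : ¬ (0 : ℕ) = j)]
        have hdeg : (P0j L n j (fun k => aext (f k))).degree
            ≤ ((n * (L - 1) - 1 : ℕ) : WithBot ℕ) := by
          rw [Polynomial.degree_le_iff_coeff_zero]
          intro t ht
          exact P0j_coeff_high L n j hL hn _ t (by have := (wb_lt _ _).mp ht; omega)
        simpa using hdeg
      · rw [if_neg hi0]
        by_cases hij : i < j
        · rw [if_pos hij, if_neg (by omega : ¬ i = j)]
          have h := PowerSeries.degree_trunc_lt
            (f i * ((P0j L n j fun k => aext (f k) : Polynomial ℂ) : PowerSeries ℂ)) (n * (L - 1))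
          have h2 := deg_helper2 _ _ h
          simpa using h2
        · by_cases hieq : i = j
          · rw [if_neg hij, if_pos hieq, if_pos hieq]
            refine le_trans (Polynomial.degree_mul_le _ _) ?_
            rw [Polynomial.degree_X]
            have h := PowerSeries.degree_trunc_lt
              (f j * ((P0j L n j fun k => aext (f k) : Polynomial ℂ) : PowerSeries ℂ)) (n * (L - 1))
            have h2 := deg_helper _ _ h
            have he : (n * (L - 1) - 1 + 1 : ℕ) = n * (L - 1) := by omega
            rw [he]
            exact h2
          · rw [if_neg hij, if_neg hieq, if_neg hieq]
            refine le_trans (Polynomial.degree_mul_le _ _) ?_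
            rw [Polynomial.degree_X]
            have h := PowerSeries.degree_trunc_lt
              (f i * ((P0j L n j fun k => aext (f k) : Polynomial ℂ) : PowerSeries ℂ)) (n * (L - 1) - 1)
            have h2 := deg_helper _ _ h
            simpa using h2
  · -- j = 0 approximation
    intro i h1i hiL t ht
    have hP : Ppoly L n f 0 0 = P00 L n (fun k => aext (f k)) := by
      rw [Ppoly, if_pos rfl, if_pos rfl]
    have hPi : Ppoly L n f 0 i = PowerSeries.trunc (n * (L - 1))
        (f i * ((P00 L n fun k => aext (f k) : Polynomial ℂ) : PowerSeries ℂ)) := by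
      rw [Ppoly, if_pos rfl, if_neg (by omega : ¬ i = 0)]
    rw [hP, hPi, map_sub, Polynomial.coeff_coe, PowerSeries.coeff_trunc]
    by_cases h : t < n * (L - 1)
    · rw [if_pos h, sub_self]
    · rw [if_neg h, zero_sub, neg_eq_zero]
      have hv := coeff_fP00 L n hL hn f i (t - n * (L - 1)) h1i hiL (by omega)
      have he : n * (L - 1) + (t - n * (L - 1)) = t := by omega
      rw [he] at hv
      exact hv
  · -- 1 ≤ i < j
    intro j i hj1 hjL h1i hij t ht
    have hP : Ppoly L n f j 0 = P0j L n j (fun k => aext (f k)) := by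
      rw [Ppoly, if_neg (by omega : ¬ j = 0), if_pos rfl]
    have hPi : Ppoly L n f j i = PowerSeries.trunc (n * (L - 1))
        (f i * ((P0j L n j fun k => aext (f k) : Polynomial ℂ) : PowerSeries ℂ)) := by
      rw [Ppoly, if_neg (by omega : ¬ j = 0), if_neg (by omega : ¬ i = 0), if_pos hij]
    rw [hP, hPi, map_sub, Polynomial.coeff_coe, PowerSeries.coeff_trunc]
    by_cases h : t < n * (L - 1)
    · rw [if_pos h, sub_self]
    · rw [if_neg h, zero_sub, neg_eq_zero]
      have hv := coeff_fP0j_lt L n j i (t - n * (L - 1)) hL hn f h1i hij hjL (by omega)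
      have he : n * (L - 1) + (t - n * (L - 1)) = t := by omega
      rw [he] at hv
      exact hv
  · -- j ≤ i
    intro j i hj1 hjL hji hiL
    have hP : Ppoly L n f j 0 = P0j L n j (fun k => aext (f k)) := by
      rw [Ppoly, if_neg (by omega : ¬ j = 0), if_pos rfl]
    by_cases hieq : i = j
    · subst hieq
      have hPi : Ppoly L n f i i = Polynomial.X * PowerSeries.trunc (n * (L - 1))
          (f i * ((P0j L n i fun k => aext (f k) : Polynomial ℂ) : PowerSeries ℂ)) := by
        rw [Ppoly, if_neg (by omega : ¬ i = 0), if_neg (by omega : ¬ i = 0),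
          if_neg (lt_irrefl i), if_pos rfl]
      rw [hP, hPi]
      set q := PowerSeries.trunc (n * (L - 1))
        (f i * ((P0j L n i fun k => aext (f k) : Polynomial ℂ) : PowerSeries ℂ)) with hq
      have hexp : ((Polynomial.X * q : Polynomial ℂ) : PowerSeries ℂ)
          - f i * (PowerSeries.X * ((P0j L n i fun k => aext (f k) : Polynomial ℂ) : PowerSeries ℂ))
          = PowerSeries.X * (((q : Polynomial ℂ) : PowerSeries ℂ)
              - f i * ((P0j L n i fun k => aext (f k) : Polynomial ℂ) : PowerSeries ℂ)) := by
        rw [Polynomial.coe_mul, Polynomial.coe_X]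
        ring
      rw [hexp]
      intro t ht
      match t with
      | 0 =>
        rw [PowerSeries.coeff_zero_eq_constantCoeff, map_mul,
          PowerSeries.constantCoeff_X, zero_mul]
      | (t + 1) =>
        rw [PowerSeries.coeff_succ_X_mul, map_sub, Polynomial.coeff_coe, hq,
          PowerSeries.coeff_trunc]
        by_cases h : t < n * (L - 1)
        · rw [if_pos h, sub_self]
        · rw [if_neg h, zero_sub, neg_eq_zero]
          have hv := coeff_fP0j_eq L n i (t - n * (L - 1)) hL hn f hj1 hjL (by omega)
          have he : n * (L - 1) + (t - n * (L - 1)) = t := by omega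
          rw [he] at hv
          exact hv
    · have hji' : j < i := by omega
      have hPi : Ppoly L n f j i = Polynomial.X * PowerSeries.trunc (n * (L - 1) - 1)
          (f i * ((P0j L n j fun k => aext (f k) : Polynomial ℂ) : PowerSeries ℂ)) := by
        rw [Ppoly, if_neg (by omega : ¬ j = 0), if_neg (by omega : ¬ i = 0),
          if_neg (by omega : ¬ i < j), if_neg hieq]
      rw [hP, hPi]
      set q := PowerSeries.trunc (n * (L - 1) - 1)
        (f i * ((P0j L n j fun k => aext (f k) : Polynomial ℂ) : PowerSeries ℂ)) with hq
      have hexp : ((Polynomial.X * q : Polynomial ℂ) : PowerSeries ℂ)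
          - f i * (PowerSeries.X * ((P0j L n j fun k => aext (f k) : Polynomial ℂ) : PowerSeries ℂ))
          = PowerSeries.X * (((q : Polynomial ℂ) : PowerSeries ℂ)
              - f i * ((P0j L n j fun k => aext (f k) : Polynomial ℂ) : PowerSeries ℂ)) := by
        rw [Polynomial.coe_mul, Polynomial.coe_X]
        ring
      rw [hexp]
      intro t ht
      match t with
      | 0 =>
        rw [PowerSeries.coeff_zero_eq_constantCoeff, map_mul,
          PowerSeries.constantCoeff_X, zero_mul]
      | (t + 1) =>
        rw [PowerSeries.coeff_succ_X_mul, map_sub, Polynomial.coeff_coe, hq,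
          PowerSeries.coeff_trunc]
        by_cases h : t < n * (L - 1) - 1
        · rw [if_pos h, sub_self]
        · rw [if_neg h, zero_sub, neg_eq_zero]
          have hv := coeff_fP0j_gt L n j i (t - (n * (L - 1) - 1)) hL hn f hj1 hji' hiL (by omega)
          have he : n * (L - 1) - 1 + (t - (n * (L - 1) - 1)) = t := by omega
          rw [he] at hv
          exact hv
end
end

section
/- Let {a^k_j}_{j≥0} ⊂ ℂ (1 ≤ k ≤ L−1) be arbitrary sequences, extended by a^k_j := 0 for j < 0, and set m = n(L−1). Then det of the (m+1)×(m+1) matrix with first row (0, …, 0, 1) (the 1 in the last position) and remaining rows the stacked blocks A^1_m(n,m+1), …, A^{L−1}_m(n,m+1) equals (−1)^m·det of the m×m matrix with rows the stacked blocks A^1_m(n,m), …, A^{L−1}_m(n,m), which in turn equals (−1)^{m(m−n)/2 + n(L−1)}·Δ^{(L)}. -/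
noncomputable section

/-- A sequence `ℕ → ℂ` extended by `0` to negative indices. -/
def hz (h : ℕ → ℕ → ℂ) (k : ℕ) : ℤ → ℂ := fun j => if 0 ≤ j then h k j.toNat else 0

/-- The block-Toeplitz determinant `Δ^{(i)}` of size `m = n(L-1)`:
`Δ^{(i)} = det[A^1_n(m,n), …, A^{i-1}_n(m,n), A^i_{n-1}(m,n), …, A^{L-1}_{n-1}(m,n)]`. -/
def Delta (L n : ℕ) (a : ℕ → ℤ → ℂ) (i : ℕ) : ℂ :=
  Matrix.det (Matrix.of fun r c : Fin (n * (L - 1)) =>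
    a ((c : ℕ) / n + 1)
      ((if (c : ℕ) / n + 1 < i then (n : ℤ) else (n : ℤ) - 1) +
        ((r : ℕ) : ℤ) - (((c : ℕ) % n : ℕ) : ℤ)))



open Equiv

def extPerm {n : ℕ} (e : Perm (Fin n)) : Perm (Fin (n+1)) :=
  (finSuccEquiv n).symm.permCongr e.optionCongr

lemma extPerm_zero {n : ℕ} (e : Perm (Fin n)) : extPerm e 0 = 0 := by
  simp [extPerm, Equiv.permCongr_apply]

lemma extPerm_succ {n : ℕ} (e : Perm (Fin n)) (x : Fin n) :
    extPerm e x.succ = (e x).succ := by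
  simp [extPerm, Equiv.permCongr_apply]

lemma sign_extPerm {n : ℕ} (e : Perm (Fin n)) :
    Equiv.Perm.sign (extPerm e) = Equiv.Perm.sign e := by
  simp [extPerm, Equiv.Perm.sign_permCongr, Equiv.optionCongr_sign]

lemma revPerm_succ_eq (n : ℕ) :
    (Fin.revPerm : Perm (Fin (n+1))) = extPerm Fin.revPerm * finRotate (n+1) := by
  ext i
  rcases eq_or_ne i (Fin.last n) with rfl | hi
  · simp [finRotate_last, extPerm_zero, Fin.rev_last]
  · obtain ⟨j, rfl⟩ := Fin.exists_castSucc_eq.mpr hi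
    have h1 : finRotate (n+1) j.castSucc = j.succ := by
      ext
      rw [coe_finRotate_of_ne_last hi]
      simp
    simp [h1, extPerm_succ, Fin.rev_castSucc]

lemma sign_revPerm (n : ℕ) :
    Equiv.Perm.sign (Fin.revPerm : Perm (Fin n)) = (-1) ^ (n * (n-1) / 2) := by
  induction n with
  | zero =>
    have : (Fin.revPerm : Perm (Fin 0)) = 1 := by ext i; exact i.elim0
    simp [this]
  | succ k ih =>
    rw [revPerm_succ_eq, map_mul, sign_extPerm, ih, sign_finRotate, ← pow_add]
    congr 1
    rw [← Nat.choose_two_right, ← Nat.choose_two_right]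
    rw [Nat.choose_succ_succ' k 1, Nat.choose_one_right, show (1:ℕ)+1 = 2 from rfl]
    omega



lemma part1 (L n : ℕ) (hL : 2 ≤ L) (hn : 0 < n) (h : ℕ → ℕ → ℂ) :
    Matrix.det (Matrix.of fun r c : Fin (n * (L - 1) + 1) =>
        if (r : ℕ) = 0 then (if (c : ℕ) = n * (L - 1) then (1 : ℂ) else 0)
        else hz h (((r : ℕ) - 1) / n + 1)
          (((n * (L - 1) : ℕ) : ℤ) + (((((r : ℕ) - 1) % n : ℕ)) : ℤ) - ((c : ℕ) : ℤ))) =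
      (-1 : ℂ) ^ (n * (L - 1)) *
        Matrix.det (Matrix.of fun r c : Fin (n * (L - 1)) =>
          hz h ((r : ℕ) / n + 1)
            (((n * (L - 1) : ℕ) : ℤ) + ((((r : ℕ) % n : ℕ)) : ℤ) - ((c : ℕ) : ℤ))) := by
  rw [Matrix.det_succ_row_zero]
  rw [Finset.sum_eq_single (Fin.last (n * (L-1)))]
  · simp only [Matrix.of_apply, Fin.val_zero, Fin.val_last, if_true, eq_self_iff_true, mul_one]
    refine congrArg (fun z => (-1 : ℂ) ^ (n * (L-1)) * z) ?_
    refine congrArg (Matrix.det (R := ℂ) (n := Fin (n * (L - 1)))) ?_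
    ext r c
    simp only [Matrix.submatrix_apply, Fin.succAbove_last, Matrix.of_apply, Fin.val_succ,
      Fin.coe_castSucc]
    rw [if_neg (by omega : ¬((r : ℕ) + 1 = 0))]
    simp
  · intro j _ hj
    have hj' : (j : ℕ) ≠ n * (L - 1) := fun hc => hj (Fin.ext (by simpa using hc))
    simp [hj']
  · simp

lemma part2 (L n : ℕ) (hL : 2 ≤ L) (hn : 0 < n) (h : ℕ → ℕ → ℂ) :
    Matrix.det (Matrix.of fun r c : Fin (n * (L - 1)) =>
        hz h ((r : ℕ) / n + 1)
          (((n * (L - 1) : ℕ) : ℤ) + ((((r : ℕ) % n : ℕ)) : ℤ) - ((c : ℕ) : ℤ))) =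
    (-1 : ℂ) ^ ((n * (L-1)) * (n * (L-1) - n) / 2) * Delta L n (hz h) L := by
  set N : Matrix (Fin (n * (L-1))) (Fin (n * (L-1))) ℂ :=
    Matrix.of fun r c : Fin (n * (L - 1)) =>
        hz h ((r : ℕ) / n + 1)
          (((n * (L - 1) : ℕ) : ℤ) + ((((r : ℕ) % n : ℕ)) : ℤ) - ((c : ℕ) : ℤ)) with hN
  set D : Matrix (Fin (n * (L-1))) (Fin (n * (L-1))) ℂ :=
    Matrix.of fun r c : Fin (n * (L - 1)) =>
        hz h ((c : ℕ) / n + 1) ((n : ℤ) + ((r : ℕ) : ℤ) - (((c : ℕ) % n : ℕ) : ℤ)) with hD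
  have hDelta : Delta L n (hz h) L = D.det := by
    unfold Delta
    congr 1
    ext r c
    have hc : (c : ℕ) / n + 1 < L := by
      have := c.isLt
      have h2 : (c : ℕ) / n < L - 1 := by
        rw [Nat.div_lt_iff_lt_mul hn]
        exact Nat.lt_of_lt_of_eq c.isLt (Nat.mul_comm n (L-1))
      omega
    simp only [Matrix.of_apply, if_pos hc]
    rfl
  -- the reindexing equivalence
  set E : Fin (L-1) × Fin n ≃ Fin (n * (L-1)) :=
    finProdFinEquiv.trans (finCongr (Nat.mul_comm (L-1) n)) with hE
  have hEval : ∀ p : Fin (L-1) × Fin n, ((E p : ℕ)) = (p.2 : ℕ) + n * (p.1 : ℕ) := fun _ => rfl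
  set ρ : Equiv.Perm (Fin (L-1) × Fin n) :=
    Equiv.prodCongr (Equiv.refl (Fin (L-1))) Fin.revPerm with hρ
  set τ : Equiv.Perm (Fin (L-1) × Fin n) :=
    Equiv.prodCongr Fin.revPerm Fin.revPerm with hτ
  have key : N.submatrix E E
      = (((D.submatrix E E).transpose.submatrix ρ id).submatrix id τ) := by
    ext p q
    obtain ⟨α, β⟩ := p
    obtain ⟨γ, δ⟩ := q
    simp only [Matrix.submatrix_apply, Matrix.transpose_apply, id_eq, hρ, hτ,
      Equiv.prodCongr_apply, Prod.map, Equiv.refl_apply, Fin.revPerm_apply, hN, hD,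
      Matrix.of_apply, hEval]
    have hβ : (β : ℕ) < n := β.isLt
    have hδ : (δ : ℕ) < n := δ.isLt
    have hγ : (γ : ℕ) < L - 1 := γ.isLt
    have hα : (α : ℕ) < L - 1 := α.isLt
    have hrevβ : ((β.rev : ℕ)) = n - 1 - β := by simp [Fin.val_rev]; omega
    have hrevδ : ((δ.rev : ℕ)) = n - 1 - δ := by simp [Fin.val_rev]; omega
    have hrevγ : ((γ.rev : ℕ)) = L - 1 - 1 - γ := by simp [Fin.val_rev]; omega
    have hdiv1 : ((β : ℕ) + n * (α : ℕ)) / n = (α : ℕ) := by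
      rw [Nat.add_mul_div_left _ _ hn, Nat.div_eq_of_lt hβ, Nat.zero_add]
    have hmod1 : ((β : ℕ) + n * (α : ℕ)) % n = (β : ℕ) := by
      rw [Nat.add_mul_mod_self_left, Nat.mod_eq_of_lt hβ]
    have hdiv2 : (((β.rev : ℕ)) + n * (α : ℕ)) / n = (α : ℕ) := by
      rw [Nat.add_mul_div_left _ _ hn, Nat.div_eq_of_lt (by omega : ((β.rev : ℕ)) < n),
        Nat.zero_add]
    have hmod2 : (((β.rev : ℕ)) + n * (α : ℕ)) % n = ((β.rev : ℕ)) := by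
      rw [Nat.add_mul_mod_self_left, Nat.mod_eq_of_lt (by omega : ((β.rev : ℕ)) < n)]
    rw [hdiv1, hdiv2, hmod1, hmod2]
    congr 1
    -- integer arithmetic
    have c1 : (((n * (L-1) : ℕ)) : ℤ) = (n : ℤ) * ((L : ℤ) - 1) := by
      push_cast [Nat.cast_sub (by omega : 1 ≤ L)]
      ring
    have c2 : ((((δ.rev : ℕ)) + n * ((γ.rev : ℕ)) : ℕ) : ℤ)
        = ((n : ℤ) - 1 - (δ : ℤ)) + (n : ℤ) * ((L : ℤ) - 2 - (γ : ℤ)) := by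
      rw [hrevδ, hrevγ]
      push_cast
      have e1 : ((n - 1 - (δ:ℕ) : ℕ) : ℤ) = (n : ℤ) - 1 - (δ : ℤ) := by omega
      have e2 : ((L - 1 - 1 - (γ:ℕ) : ℕ) : ℤ) = (L : ℤ) - 2 - (γ : ℤ) := by omega
      rw [e1, e2]
    have c3 : (((β.rev : ℕ)) : ℤ) = (n : ℤ) - 1 - (β : ℤ) := by omega
    push_cast [c1, c2, c3]
    ring
  -- now the determinant chain
  have hsρ : Equiv.Perm.sign ρ = ((-1) ^ (n*(n-1)/2) : ℤˣ) ^ (L-1) := by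
    have hrw : ρ = Equiv.prodCongrRight
        (fun _ : Fin (L-1) => (Fin.revPerm : Equiv.Perm (Fin n))) := by
      apply Equiv.ext
      rintro ⟨a, b⟩
      rfl
    rw [hrw, Equiv.Perm.sign_prodCongrRight]
    simp [sign_revPerm]
  set κ : Equiv.Perm (Fin (L-1) × Fin n) :=
    Equiv.prodCongrLeft (fun _ : Fin n => (Fin.revPerm : Equiv.Perm (Fin (L-1)))) with hκ
  have hsκ : Equiv.Perm.sign κ = ((-1) ^ ((L-1)*(L-2)/2) : ℤˣ) ^ n := by
    rw [hκ, Equiv.Perm.sign_prodCongrLeft]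
    simp [sign_revPerm]
    rw [show L - 1 - 1 = L - 2 from by omega]
  have hτκ : τ = κ * ρ := by
    apply Equiv.ext
    rintro ⟨a, b⟩
    simp [hκ, hρ, hτ, Equiv.Perm.mul_apply, Equiv.prodCongrLeft_apply]
  have hsigns : ((Equiv.Perm.sign τ : ℤ) : ℂ) * ((Equiv.Perm.sign ρ : ℤ) : ℂ)
      = (-1 : ℂ) ^ ((n * (L-1)) * (n * (L-1) - n) / 2) := by
    rw [hτκ, map_mul, ← Int.cast_mul, ← Units.val_mul, mul_assoc,
      Int.units_mul_self, mul_one, hsκ]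
    -- now ((((-1)^((L-1)*(L-2)/2))^n : ℤˣ) : ℂ) = (-1)^(...)
    push_cast
    rw [← pow_mul]
    -- parity argument
    obtain ⟨y, hy⟩ : ∃ y, (L-1)*(L-2) = 2*y := by
      have hev : Even ((L-2) * (L-2+1)) := Nat.even_mul_succ_self (L-2)
      obtain ⟨t, ht⟩ := hev
      exact ⟨t, by rw [show L-1 = (L-2)+1 by omega, Nat.mul_comm]; omega⟩
    have he1 : (L-1)*(L-2)/2 * n = y * n := by
      rw [show (L-1)*(L-2)/2 = y from by omega]
    have hsub : n*(L-1) - n = n*(L-2) := by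
      have hx : n*(L-1) = n*(L-2) + n := by
        rw [show L-1 = (L-2)+1 by omega]; ring
      omega
    have he2 : (n*(L-1)) * (n*(L-1) - n) / 2 = n*n*y := by
      rw [hsub]
      have hprod : (n*(L-1))*(n*(L-2)) = 2*(n*n*y) := by
        calc (n*(L-1))*(n*(L-2)) = n*n*((L-1)*(L-2)) := by ring
        _ = 2*(n*n*y) := by rw [hy]; ring
      rw [hprod, Nat.mul_div_cancel_left _ (by norm_num : (0:ℕ) < 2)]
    rw [he1, he2]
    have hpar : ∀ a b : ℕ, (Even a ↔ Even b) → ((-1:ℂ)^a = (-1)^b) := by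
      intro a b hab
      rcases Nat.even_or_odd a with ha|ha
      · rw [ha.neg_one_pow, (hab.mp ha).neg_one_pow]
      · have hb : Odd b := by
          rcases Nat.even_or_odd b with h'|h'
          · exact absurd (hab.mpr h') (Nat.not_even_iff_odd.mpr ha)
          · exact h'
        rw [ha.neg_one_pow, hb.neg_one_pow]
    apply hpar
    rw [Nat.even_mul, Nat.even_mul, Nat.even_mul]
    tauto
  rw [hDelta]
  rw [← Matrix.det_submatrix_equiv_self E N, key, Matrix.det_permute',
    Matrix.det_permute, Matrix.det_transpose, Matrix.det_submatrix_equiv_self,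
    ← mul_assoc, hsigns]


/-- Evaluation of the normalizing constant `NP^{(0)}` as a block-Toeplitz determinant. -/
theorem NP0_identity (L n : ℕ) (hL : 2 ≤ L) (hn : 0 < n) (h : ℕ → ℕ → ℂ) :
    (Matrix.det (Matrix.of fun r c : Fin (n * (L - 1) + 1) =>
        if (r : ℕ) = 0 then (if (c : ℕ) = n * (L - 1) then (1 : ℂ) else 0)
        else hz h (((r : ℕ) - 1) / n + 1)
          (((n * (L - 1) : ℕ) : ℤ) + (((((r : ℕ) - 1) % n : ℕ)) : ℤ) - ((c : ℕ) : ℤ))) =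
      (-1 : ℂ) ^ (n * (L - 1)) *
        Matrix.det (Matrix.of fun r c : Fin (n * (L - 1)) =>
          hz h ((r : ℕ) / n + 1)
            (((n * (L - 1) : ℕ) : ℤ) + ((((r : ℕ) % n : ℕ)) : ℤ) - ((c : ℕ) : ℤ)))) ∧
    (Matrix.det (Matrix.of fun r c : Fin (n * (L - 1) + 1) =>
        if (r : ℕ) = 0 then (if (c : ℕ) = n * (L - 1) then (1 : ℂ) else 0)
        else hz h (((r : ℕ) - 1) / n + 1)
          (((n * (L - 1) : ℕ) : ℤ) + (((((r : ℕ) - 1) % n : ℕ)) : ℤ) - ((c : ℕ) : ℤ))) =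
      (-1 : ℂ) ^ ((n * (L - 1)) * (n * (L - 1) - n) / 2 + n * (L - 1)) *
        Delta L n (hz h) L) := by
  constructor
  · exact part1 L n hL hn h
  · rw [part1 L n hL hn h, part2 L n hL hn h, pow_add]
    ring
end
end

section
/- Let {a^k_j}_{j≥0} ⊂ ℂ (1 ≤ k ≤ L−1) be arbitrary sequences, extended by a^k_j := 0 for j < 0, set m = n(L−1), and fix j with 1 ≤ j ≤ L−1. Then det of the m×m matrix with first row (a^j_{m−1}, a^j_{m−2}, …, a^j_0) and remaining rows the stacked blocks A^1_m(n,m), …, A^{j−1}_m(n,m), A^j_m(n−1,m), A^{j+1}_{m−1}(n,m), …, A^{L−1}_{m−1}(n,m) equals (−1)^{n(j−1)}·det of the m×m matrix with rows the stacked blocks A^1_m(n,m), …, A^{j−1}_m(n,m), A^j_{m−1}(n,m), A^{j+1}_{m−1}(n,m), …, A^{L−1}_{m−1}(n,m), which in turn equals (−1)^{m(m−n)/2 + n(j−1)}·Δ^{(j)}. -/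
noncomputable section

/-- Entry `(r', c)` (0-indexed) of the stacked row-blocks
`A^1_m(n,m'), …, A^{j-1}_m(n,m'), A^j_m(n-1,m'), A^{j+1}_{m-1}(n,m'), …, A^{L-1}_{m-1}(n,m')`,
where `m` is the common upper lower-index. -/
def stackJ (n j m : ℕ) (a : ℕ → ℤ → ℂ) (r' c : ℕ) : ℂ :=
  if r' < (j - 1) * n then
    a (r' / n + 1) ((m : ℤ) + ((r' % n : ℕ) : ℤ) - (c : ℤ))
  else if r' < j * n - 1 then
    a j ((m : ℤ) + (((r' - (j - 1) * n : ℕ)) : ℤ) - (c : ℤ))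
  else
    a ((r' - (j * n - 1)) / n + j + 1)
      ((m : ℤ) - 1 + ((((r' - (j * n - 1)) % n : ℕ)) : ℤ) - (c : ℤ))

open Equiv Equiv.Perm

lemma cycleRange_val' {q : ℕ} (i s : Fin q) :
    ((Fin.cycleRange i s : Fin q) : ℕ) =
      if (s : ℕ) < (i : ℕ) then (s : ℕ) + 1 else if (s : ℕ) = (i : ℕ) then 0 else (s : ℕ) := by
  cases q with
  | zero => exact s.elim0
  | succ q' =>
    rcases lt_trichotomy s i with h | h | h
    · rw [Fin.cycleRange_of_lt h, if_pos (by exact_mod_cast h), Fin.val_add_one_of_lt]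
      exact lt_of_lt_of_le h (Fin.le_last i)
    · subst h
      rw [Fin.cycleRange_self, if_neg (lt_irrefl _), if_pos rfl]
      simp
    · have h' : (i : ℕ) < (s : ℕ) := h
      rw [Fin.cycleRange_of_gt h, if_neg (by omega), if_neg (by omega)]

lemma even_mul_pred (a : ℕ) : Even (a * (a - 1)) := by
  rcases Nat.even_or_odd a with h | h
  · exact h.mul_right _
  · exact ((Nat.Odd.sub_odd h odd_one)).mul_left _

lemma neg_one_pow_congr_mod2 {a b : ℕ} (hab : a % 2 = b % 2) : ((-1 : ℂ)) ^ a = (-1) ^ b := by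
  rw [← Nat.div_add_mod a 2, ← Nat.div_add_mod b 2, hab]
  simp [pow_add, pow_mul]

lemma sign_revPerm_eq (q : ℕ) :
    Equiv.Perm.sign (Fin.revPerm : Equiv.Perm (Fin q)) = (-1) ^ (q * (q - 1) / 2) := by
  induction q with
  | zero => rw [Subsingleton.elim (Fin.revPerm : Equiv.Perm (Fin 0)) 1, Equiv.Perm.sign_one]; rfl
  | succ q ih =>
    set τ : Equiv.Perm (Fin (q + 1)) :=
      finSumFinEquiv.permCongr (Equiv.Perm.sumCongr (Fin.revPerm : Equiv.Perm (Fin q)) 1) with hτ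
    have hdec : (Fin.revPerm : Equiv.Perm (Fin (q + 1))) = finRotate (q + 1) * τ := by
      apply Equiv.ext
      intro x
      obtain ⟨y, rfl⟩ := finSumFinEquiv.surjective x
      have happ : ∀ z, τ (finSumFinEquiv z) =
          finSumFinEquiv ((Equiv.Perm.sumCongr (Fin.revPerm : Equiv.Perm (Fin q)) 1) z) := by
        intro z
        rw [hτ, Equiv.permCongr_apply, Equiv.symm_apply_apply]
      rw [Equiv.Perm.mul_apply, happ]
      cases y with
      | inl a =>
        simp only [Equiv.Perm.sumCongr_apply, Equiv.sumCongr_apply, Sum.map_inl,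
          finSumFinEquiv_apply_left, Fin.revPerm_apply]
        apply Fin.ext
        have ha := a.isLt
        rw [finRotate_succ_apply, Fin.val_add_one_of_lt
          (by rw [Fin.lt_def, Fin.val_last]; simp [Fin.val_rev]; omega)]
        simp [Fin.val_rev]
        omega
      | inr b =>
        have hb : b = 0 := Subsingleton.elim b 0
        subst hb
        simp only [Equiv.Perm.sumCongr_apply, Equiv.sumCongr_apply, Sum.map_inr,
          finSumFinEquiv_apply_right, Fin.revPerm_apply, Equiv.Perm.coe_one, id_eq]
        have : (Fin.natAdd q (0 : Fin 1)) = Fin.last q := by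
          apply Fin.ext; simp
        rw [this, finRotate_succ_apply, Fin.last_add_one, Fin.rev_last]
    rw [hdec, Equiv.Perm.sign_mul, sign_finRotate, hτ, Equiv.Perm.sign_permCongr,
      Equiv.Perm.sign_sumCongr, ih, Equiv.Perm.sign_one, mul_one, ← pow_add]
    congr 1
    simp only [Nat.add_sub_cancel]
    have h1 : 2 ∣ q * (q - 1) := (even_mul_pred q).two_dvd
    have h2 : (q + 1) * q = q * (q - 1) + 2 * q := by
      cases q with
      | zero => rfl
      | succ s => simp [Nat.succ_sub_one]; ring
    omega

/-- The block decomposition equivalence `Fin q × Fin n ≃ Fin (n * q)`,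
`(b, t) ↦ b * n + t`. -/
def blockEq (q n : ℕ) (hn : 0 < n) : Fin q × Fin n ≃ Fin (n * q) where
  toFun x := ⟨(x.1 : ℕ) * n + (x.2 : ℕ), by
    have h1 := x.1.isLt
    have h2 := x.2.isLt
    calc (x.1 : ℕ) * n + (x.2 : ℕ) < (x.1 : ℕ) * n + n := by omega
      _ = ((x.1 : ℕ) + 1) * n := by ring
      _ ≤ q * n := Nat.mul_le_mul_right n (by omega)
      _ = n * q := Nat.mul_comm q n⟩
  invFun c := (⟨(c : ℕ) / n, by
      rw [Nat.div_lt_iff_lt_mul hn]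
      exact lt_of_lt_of_le c.isLt (le_of_eq (Nat.mul_comm n q))⟩, ⟨(c : ℕ) % n, Nat.mod_lt _ hn⟩)
  left_inv := by
    rintro ⟨b, t⟩
    have ht := t.isLt
    ext
    · simp only [Nat.mul_comm _ n]
      rw [Nat.mul_add_div hn, Nat.div_eq_of_lt ht, Nat.add_zero]
    · simp only [Nat.mul_comm _ n]
      rw [Nat.mul_add_mod, Nat.mod_eq_of_lt ht]
  right_inv := by
    intro c
    apply Fin.ext
    exact Nat.div_add_mod' _ _


lemma units_neg_one_pow_cast (a : ℕ) :
    ((((-1 : ℤˣ) ^ a : ℤˣ) : ℤ) : ℂ) = (-1 : ℂ) ^ a := by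
  push_cast
  ring

/-- Evaluation of the normalizing constant `NP^{(j)}` as a block-Toeplitz determinant. -/
theorem NPj_identity (L n : ℕ) (hL : 2 ≤ L) (hn : 0 < n) (h : ℕ → ℕ → ℂ)
    (j : ℕ) (hj1 : 1 ≤ j) (hj : j < L) :
    (Matrix.det (Matrix.of fun r c : Fin (n * (L - 1)) =>
        if (r : ℕ) = 0 then hz h j (((n * (L - 1) : ℕ) : ℤ) - 1 - ((c : ℕ) : ℤ))
        else stackJ n j (n * (L - 1)) (hz h) ((r : ℕ) - 1) (c : ℕ)) =
      (-1 : ℂ) ^ (n * (j - 1)) *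
        Matrix.det (Matrix.of fun r c : Fin (n * (L - 1)) =>
          hz h ((r : ℕ) / n + 1)
            ((if (r : ℕ) / n + 1 < j then ((n * (L - 1) : ℕ) : ℤ)
              else ((n * (L - 1) : ℕ) : ℤ) - 1) +
              (((r : ℕ) % n : ℕ) : ℤ) - ((c : ℕ) : ℤ)))) ∧
    (Matrix.det (Matrix.of fun r c : Fin (n * (L - 1)) =>
        if (r : ℕ) = 0 then hz h j (((n * (L - 1) : ℕ) : ℤ) - 1 - ((c : ℕ) : ℤ))
        else stackJ n j (n * (L - 1)) (hz h) ((r : ℕ) - 1) (c : ℕ)) =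
      (-1 : ℂ) ^ ((n * (L - 1)) * (n * (L - 1) - n) / 2 + n * (j - 1)) *
        Delta L n (hz h) j) := by
  obtain ⟨j1, rfl⟩ : ∃ j1, j = j1 + 1 := ⟨j - 1, by omega⟩
  obtain ⟨L2, rfl⟩ : ∃ L2, L = L2 + 2 := ⟨L - 2, by omega⟩
  simp only [show L2 + 2 - 1 = L2 + 1 from rfl, show j1 + 1 - 1 = j1 from rfl]
  have hm0 : 0 < n * (L2 + 1) := Nat.mul_pos hn (by omega)
  have hnm : n ≤ n * (L2 + 1) := Nat.le_mul_of_pos_right n (by omega)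
  have hrel : j1 * n + n = (j1 + 1) * n := by ring
  have hjn : (j1 + 1) * n ≤ n * (L2 + 1) := by
    calc (j1 + 1) * n ≤ (L2 + 1) * n := Nat.mul_le_mul_right n (by omega)
      _ = n * (L2 + 1) := Nat.mul_comm _ _
  have hK : j1 * n < n * (L2 + 1) := by omega
  -- Claim A : the first identity
  have claimA :
      Matrix.det (Matrix.of fun r c : Fin (n * (L2 + 1)) =>
          if (r : ℕ) = 0 then hz h (j1 + 1) (((n * (L2 + 1) : ℕ) : ℤ) - 1 - ((c : ℕ) : ℤ))
          else stackJ n (j1 + 1) (n * (L2 + 1)) (hz h) ((r : ℕ) - 1) (c : ℕ)) =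
        (-1 : ℂ) ^ (n * j1) *
          Matrix.det (Matrix.of fun r c : Fin (n * (L2 + 1)) =>
            hz h ((r : ℕ) / n + 1)
              ((if (r : ℕ) / n + 1 < j1 + 1 then ((n * (L2 + 1) : ℕ) : ℤ)
                else ((n * (L2 + 1) : ℕ) : ℤ) - 1) +
                (((r : ℕ) % n : ℕ) : ℤ) - ((c : ℕ) : ℤ))) := by
    have hsub : (Matrix.of fun r c : Fin (n * (L2 + 1)) =>
          if (r : ℕ) = 0 then hz h (j1 + 1) (((n * (L2 + 1) : ℕ) : ℤ) - 1 - ((c : ℕ) : ℤ))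
          else stackJ n (j1 + 1) (n * (L2 + 1)) (hz h) ((r : ℕ) - 1) (c : ℕ)).submatrix
            (⇑(Fin.cycleRange (⟨j1 * n, hK⟩ : Fin (n * (L2 + 1))))) id =
        Matrix.of fun r c : Fin (n * (L2 + 1)) =>
            hz h ((r : ℕ) / n + 1)
              ((if (r : ℕ) / n + 1 < j1 + 1 then ((n * (L2 + 1) : ℕ) : ℤ)
                else ((n * (L2 + 1) : ℕ) : ℤ) - 1) +
                (((r : ℕ) % n : ℕ) : ℤ) - ((c : ℕ) : ℤ)) := by
      ext s c
      simp only [Matrix.submatrix_apply, Matrix.of_apply, id_eq]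
      rw [cycleRange_val']
      rw [show ((⟨j1 * n, hK⟩ : Fin (n * (L2 + 1))) : ℕ) = j1 * n from rfl]
      rcases lt_trichotomy ((s : ℕ)) (j1 * n) with hs | hs | hs
      · rw [if_pos hs, if_neg (by omega)]
        simp only [Nat.add_sub_cancel]
        simp only [stackJ, show j1 + 1 - 1 = j1 from rfl]
        rw [if_pos hs]
        have hd : (s : ℕ) / n < j1 := (Nat.div_lt_iff_lt_mul hn).mpr hs
        rw [if_pos (show (s : ℕ) / n + 1 < j1 + 1 by omega)]
      · rw [if_neg (show ¬((s : ℕ) < j1 * n) by omega), if_pos hs,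
          if_pos (show (0 : ℕ) = 0 from rfl), hs]
        rw [Nat.mul_div_cancel _ hn, Nat.mul_mod_left, if_neg (lt_irrefl _)]
        congr 1
        push_cast
        ring
      · rw [if_neg (show ¬((s : ℕ) < j1 * n) by omega),
          if_neg (show ¬((s : ℕ) = j1 * n) by omega),
          if_neg (show ¬((s : ℕ) = 0) by omega)]
        simp only [stackJ, show j1 + 1 - 1 = j1 from rfl]
        rw [if_neg (by omega : ¬((s : ℕ) - 1 < j1 * n))]
        by_cases hs2 : (s : ℕ) < (j1 + 1) * n
        · rw [if_pos (show (s : ℕ) - 1 < (j1 + 1) * n - 1 by omega)]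
          have h1 : (s : ℕ) / n = j1 := Nat.div_eq_of_lt_le (by omega) (by omega)
          have h2 : (s : ℕ) % n = (s : ℕ) - j1 * n := by
            have h3 := Nat.div_add_mod ((s : ℕ)) n
            rw [h1] at h3
            have h4 : n * j1 = j1 * n := Nat.mul_comm _ _
            omega
          rw [h1, h2, if_neg (lt_irrefl _)]
          congr 1
          rw [show (s : ℕ) - 1 - j1 * n = ((s : ℕ) - j1 * n) - 1 by omega]
          rw [Nat.cast_sub (by omega : 1 ≤ (s : ℕ) - j1 * n),
            Nat.cast_sub (by omega : j1 * n ≤ (s : ℕ))]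
          push_cast
          ring
        · rw [if_neg (show ¬((s : ℕ) - 1 < (j1 + 1) * n - 1) by omega)]
          rw [show (s : ℕ) - 1 - ((j1 + 1) * n - 1) = (s : ℕ) - (j1 + 1) * n by omega]
          have hs3 : (s : ℕ) = n * (j1 + 1) + ((s : ℕ) - (j1 + 1) * n) := by
            have h4 : n * (j1 + 1) = (j1 + 1) * n := Nat.mul_comm _ _
            omega
          have h1 : (s : ℕ) / n = (j1 + 1) + ((s : ℕ) - (j1 + 1) * n) / n := by
            conv_lhs => rw [hs3]
            rw [Nat.mul_add_div hn]
          have h2 : (s : ℕ) % n = ((s : ℕ) - (j1 + 1) * n) % n := by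
            conv_lhs => rw [hs3]
            rw [Nat.mul_add_mod]
          rw [h1, h2, if_neg (show ¬((j1 + 1) + ((s : ℕ) - (j1 + 1) * n) / n + 1 < j1 + 1) by
            generalize ((s : ℕ) - (j1 + 1) * n) / n = W; omega)]
          rw [show ((s : ℕ) - (j1 + 1) * n) / n + (j1 + 1) + 1
              = (j1 + 1) + ((s : ℕ) - (j1 + 1) * n) / n + 1 by
            generalize ((s : ℕ) - (j1 + 1) * n) / n = W; omega]
    have hdet := Matrix.det_permute (Fin.cycleRange (⟨j1 * n, hK⟩ : Fin (n * (L2 + 1))))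
      (Matrix.of fun r c : Fin (n * (L2 + 1)) =>
          if (r : ℕ) = 0 then hz h (j1 + 1) (((n * (L2 + 1) : ℕ) : ℤ) - 1 - ((c : ℕ) : ℤ))
          else stackJ n (j1 + 1) (n * (L2 + 1)) (hz h) ((r : ℕ) - 1) (c : ℕ))
    rw [hsub, Fin.sign_cycleRange,
      show ((⟨j1 * n, hK⟩ : Fin (n * (L2 + 1))) : ℕ) = j1 * n from rfl,
      units_neg_one_pow_cast] at hdet
    rw [hdet, ← mul_assoc, ← pow_add,
      neg_one_pow_congr_mod2 (show (n * j1 + j1 * n) % 2 = 0 % 2 by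
        have hcomm : n * j1 = j1 * n := Nat.mul_comm _ _
        omega),
      pow_zero, one_mul]
  -- Claim B : relating the row-stacked matrix to Delta
  have claimB :
      Matrix.det (Matrix.of fun r c : Fin (n * (L2 + 1)) =>
            hz h ((r : ℕ) / n + 1)
              ((if (r : ℕ) / n + 1 < j1 + 1 then ((n * (L2 + 1) : ℕ) : ℤ)
                else ((n * (L2 + 1) : ℕ) : ℤ) - 1) +
                (((r : ℕ) % n : ℕ) : ℤ) - ((c : ℕ) : ℤ))) =
        (-1 : ℂ) ^ ((n * (n - 1) / 2) * (L2 + 1) + (n * (L2 + 1)) * (n * (L2 + 1) - 1) / 2) *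
          Delta (L2 + 2) n (hz h) (j1 + 1) := by
    set NN : Matrix (Fin (n * (L2 + 1))) (Fin (n * (L2 + 1))) ℂ :=
      Matrix.of fun r c : Fin (n * (L2 + 1)) =>
            hz h ((r : ℕ) / n + 1)
              ((if (r : ℕ) / n + 1 < j1 + 1 then ((n * (L2 + 1) : ℕ) : ℤ)
                else ((n * (L2 + 1) : ℕ) : ℤ) - 1) +
                (((r : ℕ) % n : ℕ) : ℤ) - ((c : ℕ) : ℤ)) with hNN
    set ρ : Equiv.Perm (Fin (n * (L2 + 1))) := Fin.revPerm with hρ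
    set π : Equiv.Perm (Fin (n * (L2 + 1))) :=
      (blockEq (L2 + 1) n hn).permCongr
        (Equiv.prodCongrRight fun _ : Fin (L2 + 1) => (Fin.revPerm : Equiv.Perm (Fin n)))
      with hπ
    have hπval : ∀ c : Fin (n * (L2 + 1)),
        ((π c) : ℕ) = ((c : ℕ) / n) * n + (n - ((c : ℕ) % n + 1)) := fun c => rfl
    have hρval : ∀ r : Fin (n * (L2 + 1)),
        ((ρ r) : ℕ) = n * (L2 + 1) - ((r : ℕ) + 1) := fun r => Fin.val_rev r
    have keyB : (NN.transpose).submatrix ⇑ρ ⇑π =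
        Matrix.of (fun r c : Fin (n * (L2 + 1)) =>
          hz h ((c : ℕ) / n + 1)
            ((if (c : ℕ) / n + 1 < j1 + 1 then (n : ℤ) else (n : ℤ) - 1) +
              ((r : ℕ) : ℤ) - (((c : ℕ) % n : ℕ) : ℤ))) := by
      ext r c
      simp only [Matrix.submatrix_apply, Matrix.transpose_apply, Matrix.of_apply, hNN]
      rw [hπval, hρval]
      have hcm := Nat.mod_lt ((c : ℕ)) hn
      have h1 : (((c : ℕ) / n) * n + (n - ((c : ℕ) % n + 1))) / n = (c : ℕ) / n := by
        rw [Nat.mul_comm ((c : ℕ) / n) n, Nat.mul_add_div hn,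
          Nat.div_eq_of_lt (show n - ((c : ℕ) % n + 1) < n by omega), Nat.add_zero]
      have h2 : (((c : ℕ) / n) * n + (n - ((c : ℕ) % n + 1))) % n = n - ((c : ℕ) % n + 1) := by
        rw [Nat.mul_comm ((c : ℕ) / n) n, Nat.mul_add_mod,
          Nat.mod_eq_of_lt (show n - ((c : ℕ) % n + 1) < n by omega)]
      rw [h1, h2]
      congr 1
      rw [Nat.cast_sub (by omega : (c : ℕ) % n + 1 ≤ n),
        Nat.cast_sub (by exact r.isLt : (r : ℕ) + 1 ≤ n * (L2 + 1))]
      push_cast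
      split_ifs <;> ring
    have hdet1 : ((NN.transpose).submatrix ⇑ρ ⇑π).det =
        (((Equiv.Perm.sign π : ℤ) : ℂ)) * ((((Equiv.Perm.sign ρ : ℤ) : ℂ)) * NN.det) := by
      rw [show ⇑ρ = ⇑ρ ∘ id from rfl, show ⇑π = id ∘ ⇑π from rfl,
        ← Matrix.submatrix_submatrix, Matrix.det_permute', Matrix.det_permute,
        Matrix.det_transpose]
    have hsρ : Equiv.Perm.sign ρ = (-1) ^ ((n * (L2 + 1)) * (n * (L2 + 1) - 1) / 2) :=
      sign_revPerm_eq _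
    have hsπ : Equiv.Perm.sign π = (-1) ^ ((n * (n - 1) / 2) * (L2 + 1)) := by
      rw [hπ, Equiv.Perm.sign_permCongr, Equiv.Perm.sign_prodCongrRight]
      simp only [sign_revPerm_eq n]
      rw [Finset.prod_const, Finset.card_univ, Fintype.card_fin, ← pow_mul]
    have hDelta : Delta (L2 + 2) n (hz h) (j1 + 1) =
        Matrix.det (Matrix.of (fun r c : Fin (n * (L2 + 1)) =>
          hz h ((c : ℕ) / n + 1)
            ((if (c : ℕ) / n + 1 < j1 + 1 then (n : ℤ) else (n : ℤ) - 1) +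
              ((r : ℕ) : ℤ) - (((c : ℕ) % n : ℕ) : ℤ)))) := rfl
    have hD : Matrix.det (Matrix.of (fun r c : Fin (n * (L2 + 1)) =>
          hz h ((c : ℕ) / n + 1)
            ((if (c : ℕ) / n + 1 < j1 + 1 then (n : ℤ) else (n : ℤ) - 1) +
              ((r : ℕ) : ℤ) - (((c : ℕ) % n : ℕ) : ℤ)))) =
        (-1 : ℂ) ^ ((n * (n - 1) / 2) * (L2 + 1)) *
          ((-1 : ℂ) ^ ((n * (L2 + 1)) * (n * (L2 + 1) - 1) / 2) * NN.det) := by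
      rw [← keyB, hdet1, hsπ, hsρ, units_neg_one_pow_cast, units_neg_one_pow_cast]
    rw [hDelta, hD, ← mul_assoc, ← mul_assoc, ← pow_add, ← pow_add,
      neg_one_pow_congr_mod2 (show ((n * (n - 1) / 2) * (L2 + 1) +
          (n * (L2 + 1)) * (n * (L2 + 1) - 1) / 2 + (n * (n - 1) / 2) * (L2 + 1) +
          (n * (L2 + 1)) * (n * (L2 + 1) - 1) / 2) % 2 = 0 % 2 by omega),
      pow_zero, one_mul]
  refine ⟨claimA, ?_⟩
  have e1 : 2 ∣ (n * (L2 + 1)) * (n * (L2 + 1) - 1) := (even_mul_pred _).two_dvd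
  have e2 : 2 ∣ n * (n - 1) := (even_mul_pred n).two_dvd
  have k1 : (n * (L2 + 1)) * (n * (L2 + 1) - 1) =
      (n * (L2 + 1)) * (n * (L2 + 1) - n) + (n * (L2 + 1)) * (n - 1) := by
    rw [← Nat.mul_add]
    congr 1
    omega
  have k3 : (n * (L2 + 1)) * (n - 1) = 2 * ((n * (n - 1) / 2) * (L2 + 1)) := by
    calc (n * (L2 + 1)) * (n - 1) = (n * (n - 1)) * (L2 + 1) := by ring
      _ = (2 * (n * (n - 1) / 2)) * (L2 + 1) := by rw [Nat.mul_div_cancel' e2]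
      _ = 2 * ((n * (n - 1) / 2) * (L2 + 1)) := by ring
  have final : (-1 : ℂ) ^ (n * j1) *
      ((-1 : ℂ) ^ ((n * (n - 1) / 2) * (L2 + 1) + (n * (L2 + 1)) * (n * (L2 + 1) - 1) / 2) *
        Delta (L2 + 2) n (hz h) (j1 + 1)) =
      (-1 : ℂ) ^ ((n * (L2 + 1)) * (n * (L2 + 1) - n) / 2 + n * j1) *
        Delta (L2 + 2) n (hz h) (j1 + 1) := by
    rw [← mul_assoc, ← pow_add,
      neg_one_pow_congr_mod2 (show (n * j1 + ((n * (n - 1) / 2) * (L2 + 1) +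
        (n * (L2 + 1)) * (n * (L2 + 1) - 1) / 2)) % 2 =
        ((n * (L2 + 1)) * (n * (L2 + 1) - n) / 2 + n * j1) % 2 by omega)]
  exact claimA.trans ((congrArg (fun x => (-1 : ℂ) ^ (n * j1) * x) claimB).trans final)
end
end

section
/- Let K ≥ 1 and suppose that in the vector continued fraction algorithm all constant terms a^i[k] are nonzero for 0 ≤ i ≤ L−1 and 0 ≤ k ≤ K−1 (so the recursion f[k+1] = T[k]f[k] is defined up to step K and each f[k] ∈ ℂ[[w]]^L). Let φ := ᵀ(f_1/f_0, …, f_{L−1}/f_0) ∈ ℂ[[w]]^{L−1}. For 1 ≤ k ≤ K define the vector of rational functions ᵀ(ϖ_0, ϖ_1, …, ϖ_{L−1}) := T[0]^{−1}T[1]^{−1}⋯T[k−1]^{−1}·ᵀ(1, 0, …, 0). Then each ϖ_i is regular at w = 0 with ϖ_0(0) ≠ 0, and the kth convergent Π_k := ᵀ(ϖ_1/ϖ_0, …, ϖ_{L−1}/ϖ_0) satisfies φ − Π_k = O(w^k) componentwise (comparing Taylor expansions at w = 0). -/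
noncomputable section

/-- The matrix `M[·]` of the vector continued fraction algorithm, over power series:
`(0, L-1)`-entry `w`, `(i, i-1)`-entry `1`, `(i,i)`-entry `-a^{i-1}/a^i` for `1 ≤ i ≤ L-1`.
One has `T[·] = w⁻¹ · M[·]`. -/
def cfM (L : ℕ) (g : Fin L → PowerSeries ℂ) : Matrix (Fin L) (Fin L) (PowerSeries ℂ) :=
  Matrix.of fun i j =>
    if (i : ℕ) = 0 then (if (j : ℕ) = L - 1 then PowerSeries.X else 0)
    else if (j : ℕ) + 1 = (i : ℕ) then 1
    else if j = i then
      - PowerSeries.C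
          (PowerSeries.constantCoeff (g ⟨(i : ℕ) - 1, lt_of_le_of_lt (Nat.sub_le _ _) i.isLt⟩) /
            PowerSeries.constantCoeff (g i))
    else 0

/-- One step `f ↦ T[·]·f = w⁻¹·(M[·]·f)` of the vector continued fraction algorithm
(the product `M[·]·f` is divisible by `w`, so this shift is division by `w`). -/
def cfStep (L : ℕ) (g : Fin L → PowerSeries ℂ) : Fin L → PowerSeries ℂ :=
  fun i => PowerSeries.mk fun t =>
    PowerSeries.coeff (t + 1) (∑ j, cfM L g i j * g j)

/-- The iterates `f[k]` of the vector continued fraction algorithm. -/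
def cfIter (L : ℕ) (f : Fin L → PowerSeries ℂ) : ℕ → (Fin L → PowerSeries ℂ)
  | 0 => f
  | k + 1 => cfStep L (cfIter L f k)

/-- The matrix `T[·] = w⁻¹ M[·]` as a matrix of rational functions. -/
def cfT (L : ℕ) (g : Fin L → PowerSeries ℂ) : Matrix (Fin L) (Fin L) (RatFunc ℂ) :=
  Matrix.of fun i j =>
    (RatFunc.X)⁻¹ *
      (if (i : ℕ) = 0 then (if (j : ℕ) = L - 1 then RatFunc.X else 0)
       else if (j : ℕ) + 1 = (i : ℕ) then 1
       else if j = i then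
         - RatFunc.C
             (PowerSeries.constantCoeff (g ⟨(i : ℕ) - 1, lt_of_le_of_lt (Nat.sub_le _ _) i.isLt⟩) /
               PowerSeries.constantCoeff (g i))
       else 0)


/-! ### Auxiliary development -/

namespace CFAux

open PowerSeries

variable {A : Type*} [CommRing A]

/-- Generic version of `cfM` over any commutative ring. -/
def genM (L : ℕ) (φ : ℂ →+* A) (x : A) (u : Fin L → ℂ) : Matrix (Fin L) (Fin L) A :=
  Matrix.of fun i j =>
    if (i : ℕ) = 0 then (if (j : ℕ) = L - 1 then x else 0)
    else if (j : ℕ) + 1 = (i : ℕ) then 1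
    else if j = i then - φ (u ⟨(i : ℕ) - 1, lt_of_le_of_lt (Nat.sub_le _ _) i.isLt⟩ / u i)
    else 0

/-- The (rescaled) inverse matrix `S` with `M * S = x • 1`. -/
def genS (L : ℕ) (hL : 0 < L) (φ : ℂ →+* A) (x : A) (u : Fin L → ℂ) :
    Matrix (Fin L) (Fin L) A :=
  Matrix.of fun i j =>
    if (j : ℕ) = 0 then φ (u i / u ⟨L - 1, Nat.sub_lt hL one_pos⟩)
    else if (i : ℕ) < (j : ℕ) then
      x * φ (u i / u ⟨(j : ℕ) - 1, lt_of_le_of_lt (Nat.sub_le _ _) j.isLt⟩)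
    else 0

lemma sum_genM_row0 (L : ℕ) (hL : 0 < L) (φ : ℂ →+* A) (x : A) (u : Fin L → ℂ)
    (i : Fin L) (hi : (i : ℕ) = 0) (v : Fin L → A) :
    ∑ d, genM L φ x u i d * v d = x * v ⟨L - 1, Nat.sub_lt hL one_pos⟩ := by
  rw [Finset.sum_eq_single (⟨L - 1, Nat.sub_lt hL one_pos⟩ : Fin L)]
  · simp [genM, hi]
  · intro d _ hd
    have : (d : ℕ) ≠ L - 1 := fun h => hd (Fin.ext h)
    simp [genM, hi, this]
  · simp

lemma sum_genM_row (L : ℕ) (φ : ℂ →+* A) (x : A) (u : Fin L → ℂ)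
    (i : Fin L) (hi : (i : ℕ) ≠ 0) (v : Fin L → A) :
    ∑ d, genM L φ x u i d * v d =
      v ⟨(i : ℕ) - 1, lt_of_le_of_lt (Nat.sub_le _ _) i.isLt⟩
        - φ (u ⟨(i : ℕ) - 1, lt_of_le_of_lt (Nat.sub_le _ _) i.isLt⟩ / u i) * v i := by
  classical
  set d1 : Fin L := ⟨(i : ℕ) - 1, lt_of_le_of_lt (Nat.sub_le _ _) i.isLt⟩ with hd1
  have hd1v : (d1 : ℕ) = (i : ℕ) - 1 := rfl
  have hne : d1 ≠ i := by
    intro h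
    have := congrArg Fin.val h
    rw [hd1v] at this
    omega
  have hsupp : ∀ d ∈ (Finset.univ : Finset (Fin L)), d ∉ ({d1, i} : Finset (Fin L)) →
      genM L φ x u i d * v d = 0 := by
    intro d _ hd
    simp only [Finset.mem_insert, Finset.mem_singleton, not_or] at hd
    have h1 : ¬((d : ℕ) + 1 = (i : ℕ)) := by
      intro h
      exact hd.1 (Fin.ext (by rw [hd1v]; omega))
    simp [genM, hi, h1, hd.2]
  rw [← Finset.sum_subset (Finset.subset_univ ({d1, i} : Finset (Fin L))) hsupp,
    Finset.sum_pair hne]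
  have e1 : genM L φ x u i d1 = 1 := by
    have h1 : (d1 : ℕ) + 1 = (i : ℕ) := by rw [hd1v]; omega
    simp [genM, hi, h1]
  have e2 : genM L φ x u i i = - φ (u d1 / u i) := by
    have h1 : ¬((i : ℕ) + 1 = (i : ℕ)) := by omega
    simp [genM, hi, h1, hd1]
  rw [e1, e2]
  ring

lemma genM_mul_genS (L : ℕ) (hL : 0 < L) (φ : ℂ →+* A) (x : A) (u : Fin L → ℂ)
    (hu : ∀ i, u i ≠ 0) :
    genM L φ x u * genS L hL φ x u = x • (1 : Matrix (Fin L) (Fin L) A) := by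
  have hdiv : ∀ a b c : ℂ, b ≠ 0 → a / b * (b / c) = a / c := fun a b c hb => by
    rw [div_mul_div_comm, mul_comm a b, mul_div_mul_left _ _ hb]
  ext i j
  rw [Matrix.mul_apply, Matrix.smul_apply, Matrix.one_apply]
  simp only [smul_eq_mul, mul_ite, mul_one, mul_zero]
  rcases eq_or_ne ((i : ℕ)) 0 with hi | hi
  · rw [sum_genM_row0 L hL φ x u i hi]
    rcases eq_or_ne ((j : ℕ)) 0 with hj | hj
    · have hij : i = j := Fin.ext (by omega)
      have h1 : u (⟨L - 1, Nat.sub_lt hL one_pos⟩ : Fin L) /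
          u (⟨L - 1, Nat.sub_lt hL one_pos⟩ : Fin L) = 1 := div_self (hu _)
      simp only [genS, Matrix.of_apply, if_pos hj, h1, map_one, mul_one, if_pos hij]
    · have hlt : ¬ ((L - 1 : ℕ) < (j : ℕ)) := by omega
      have hij : i ≠ j := fun h => hj (by rw [← h]; exact hi)
      simp only [genS, Matrix.of_apply, if_neg hj, if_neg hlt, mul_zero, if_neg hij]
  · rw [sum_genM_row L φ x u i hi]
    set d1 : Fin L := ⟨(i : ℕ) - 1, lt_of_le_of_lt (Nat.sub_le _ _) i.isLt⟩ with hd1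
    have hd1v : (d1 : ℕ) = (i : ℕ) - 1 := rfl
    rcases eq_or_ne ((j : ℕ)) 0 with hj | hj
    · have hij : i ≠ j := fun h => hi (by rw [h]; exact hj)
      rw [if_neg hij]
      simp only [genS, Matrix.of_apply, if_pos hj]
      rw [← map_mul, ← map_sub, hdiv _ _ _ (hu i), sub_self, map_zero]
    · rcases lt_trichotomy ((i : ℕ)) ((j : ℕ)) with h | h | h
      · have hij : i ≠ j := fun h' => absurd (congrArg Fin.val h') h.ne
        have hlt1 : (d1 : ℕ) < (j : ℕ) := by rw [hd1v]; omega
        simp only [genS, Matrix.of_apply, if_neg hj, if_pos hlt1, if_pos h, if_neg hij]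
        rw [show φ (u d1 / u ⟨(j : ℕ) - 1, lt_of_le_of_lt (Nat.sub_le _ _) j.isLt⟩) =
            φ (u d1 / u i) *
              φ (u i / u ⟨(j : ℕ) - 1, lt_of_le_of_lt (Nat.sub_le _ _) j.isLt⟩) from by
          rw [← map_mul, hdiv _ _ _ (hu i)]]
        ring
      · have hij : i = j := Fin.ext h
        have hlt1 : (d1 : ℕ) < (j : ℕ) := by rw [hd1v]; omega
        have hnlt : ¬ ((i : ℕ) < (j : ℕ)) := by omega
        have hdj : (⟨(j : ℕ) - 1, lt_of_le_of_lt (Nat.sub_le _ _) j.isLt⟩ : Fin L) = d1 :=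
          Fin.ext (show (j : ℕ) - 1 = (i : ℕ) - 1 by omega)
        simp only [genS, Matrix.of_apply, if_neg hj, if_pos hlt1, if_neg hnlt, if_pos hij, hdj]
        rw [div_self (hu d1), map_one]
        ring
      · have hij : i ≠ j := fun h' => absurd (congrArg Fin.val h') h.ne'
        have hlt1 : ¬ ((d1 : ℕ) < (j : ℕ)) := by rw [hd1v]; omega
        have hnlt : ¬ ((i : ℕ) < (j : ℕ)) := by omega
        simp only [genS, Matrix.of_apply, if_neg hj, if_neg hlt1, if_neg hnlt, if_neg hij]
        ring

lemma map_genM {B : Type*} [CommRing B] (ψ : A →+* B) (L : ℕ) (φ : ℂ →+* A) (x : A)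
    (u : Fin L → ℂ) : (genM L φ x u).map ψ = genM L (ψ.comp φ) (ψ x) u := by
  ext i j
  simp only [genM, Matrix.map_apply, Matrix.of_apply, RingHom.coe_comp, Function.comp_apply]
  split_ifs <;> simp

lemma map_genS {B : Type*} [CommRing B] (ψ : A →+* B) (L : ℕ) (hL : 0 < L) (φ : ℂ →+* A)
    (x : A) (u : Fin L → ℂ) : (genS L hL φ x u).map ψ = genS L hL (ψ.comp φ) (ψ x) u := by
  ext i j
  simp only [genS, Matrix.map_apply, Matrix.of_apply, RingHom.coe_comp, Function.comp_apply]
  split_ifs <;> simp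

lemma genS_mul_genM_field {F : Type*} [Field F] (L : ℕ) (hL : 0 < L) (φ : ℂ →+* F) (x : F)
    (hx : x ≠ 0) (u : Fin L → ℂ) (hu : ∀ i, u i ≠ 0) :
    genS L hL φ x u * genM L φ x u = x • (1 : Matrix (Fin L) (Fin L) F) := by
  have h1 : genM L φ x u * (x⁻¹ • genS L hL φ x u) = 1 := by
    rw [Matrix.mul_smul, genM_mul_genS L hL φ x u hu, smul_smul, inv_mul_cancel₀ hx, one_smul]
  have h2 : (x⁻¹ • genS L hL φ x u) * genM L φ x u = 1 := mul_eq_one_comm.mp h1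
  calc genS L hL φ x u * genM L φ x u
      = x • ((x⁻¹ • genS L hL φ x u) * genM L φ x u) := by
        rw [Matrix.smul_mul, smul_smul, mul_inv_cancel₀ hx, one_smul]
    _ = x • 1 := by rw [h2]

lemma genS_mul_genM_PS (L : ℕ) (hL : 0 < L) (u : Fin L → ℂ) (hu : ∀ i, u i ≠ 0) :
    genS L hL (PowerSeries.C) PowerSeries.X u * genM L (PowerSeries.C) PowerSeries.X u =
      (PowerSeries.X : PowerSeries ℂ) • (1 : Matrix (Fin L) (Fin L) (PowerSeries ℂ)) := by
  set ι : PowerSeries ℂ →+* LaurentSeries ℂ := HahnSeries.ofPowerSeries ℤ ℂ with hι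
  have hinj : Function.Injective ι := HahnSeries.ofPowerSeries_injective
  have hx : ι PowerSeries.X ≠ 0 := by
    intro h
    exact PowerSeries.X_ne_zero (hinj (h.trans (map_zero ι).symm))
  have key := genS_mul_genM_field (F := LaurentSeries ℂ) L hL (ι.comp (PowerSeries.C))
    (ι PowerSeries.X) hx u hu
  have hone : ((PowerSeries.X : PowerSeries ℂ) • (1 : Matrix (Fin L) (Fin L) (PowerSeries ℂ))).map ι =
      ι PowerSeries.X • (1 : Matrix (Fin L) (Fin L) (LaurentSeries ℂ)) := by
    ext i j
    simp only [Matrix.map_apply, Matrix.smul_apply, Matrix.one_apply, smul_eq_mul, map_mul,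
      apply_ite ι, map_one, map_zero]
  have hmap : ((genS L hL (PowerSeries.C) PowerSeries.X u *
      genM L (PowerSeries.C) PowerSeries.X u).map ι) =
      (((PowerSeries.X : PowerSeries ℂ) • (1 : Matrix (Fin L) (Fin L) (PowerSeries ℂ))).map ι) := by
    rw [Matrix.map_mul, map_genS, map_genM, key, hone]
  apply Matrix.ext
  intro i j
  exact hinj (congrArg (fun M => M i j) hmap)

/-- The constant-term vector of the iterates. -/
def uu (L : ℕ) (f : Fin L → PowerSeries ℂ) (t : ℕ) : Fin L → ℂ :=
  fun i => PowerSeries.constantCoeff (cfIter L f t i)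

/-- The `S`-matrix at step `t`, over power series. -/
def SP (L : ℕ) (hL : 0 < L) (f : Fin L → PowerSeries ℂ) (t : ℕ) :
    Matrix (Fin L) (Fin L) (PowerSeries ℂ) :=
  genS L hL (PowerSeries.C) PowerSeries.X (uu L f t)

lemma cfM_eq (L : ℕ) (g : Fin L → PowerSeries ℂ) :
    cfM L g = genM L (PowerSeries.C) PowerSeries.X
      (fun i => PowerSeries.constantCoeff (g i)) := rfl

set_option synthInstance.maxHeartbeats 400000 in
lemma cfT_eq (L : ℕ) (g : Fin L → PowerSeries ℂ) :
    cfT L g = (RatFunc.X : RatFunc ℂ)⁻¹ • genM L RatFunc.C RatFunc.X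
      (fun i => PowerSeries.constantCoeff (g i)) := rfl

lemma mulVec_cfM (L : ℕ) (hL : 0 < L) (g : Fin L → PowerSeries ℂ)
    (hu : ∀ i, PowerSeries.constantCoeff (g i) ≠ 0) :
    (cfM L g).mulVec g = fun i => PowerSeries.X * cfStep L g i := by
  funext i
  have hsum : (cfM L g).mulVec g i = ∑ j, cfM L g i j * g j := rfl
  have hc0 : PowerSeries.constantCoeff (∑ j, cfM L g i j * g j) = 0 := by
    rcases eq_or_ne ((i : ℕ)) 0 with hi | hi
    · rw [cfM_eq, sum_genM_row0 L hL _ _ _ i hi]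
      simp
    · rw [cfM_eq, sum_genM_row L _ _ _ i hi]
      simp only [map_sub, map_mul, PowerSeries.constantCoeff_C]
      rw [div_mul_cancel₀ _ (hu i), sub_self]
  rw [hsum]
  apply PowerSeries.ext
  intro n
  cases n with
  | zero =>
    rw [PowerSeries.coeff_zero_eq_constantCoeff, hc0, map_mul, PowerSeries.constantCoeff_X,
      zero_mul]
  | succ n =>
    rw [PowerSeries.coeff_succ_X_mul, cfStep, PowerSeries.coeff_mk]

lemma iter_eq (L : ℕ) (hL : 0 < L) (f : Fin L → PowerSeries ℂ) (t : ℕ)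
    (hu : ∀ i, uu L f t i ≠ 0) :
    cfIter L f t = (SP L hL f t).mulVec (cfIter L f (t + 1)) := by
  have h1 : (cfM L (cfIter L f t)).mulVec (cfIter L f t)
      = (PowerSeries.X : PowerSeries ℂ) • cfIter L f (t + 1) := by
    rw [mulVec_cfM L hL _ hu]
    funext i
    simp [cfIter]
  have h2 : (SP L hL f t).mulVec ((cfM L (cfIter L f t)).mulVec (cfIter L f t))
      = (PowerSeries.X : PowerSeries ℂ) • cfIter L f t := by
    rw [Matrix.mulVec_mulVec, cfM_eq,
      show (fun i => PowerSeries.constantCoeff (cfIter L f t i)) = uu L f t from rfl,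
      SP, genS_mul_genM_PS L hL _ hu,
      Matrix.smul_mulVec, Matrix.one_mulVec]
  rw [h1, Matrix.mulVec_smul] at h2
  funext i
  have h3 := congrFun h2 i
  simp only [Pi.smul_apply, smul_eq_mul] at h3
  exact (mul_left_cancel₀ PowerSeries.X_ne_zero h3).symm

/-- The product matrix `Q[k] = S[0]⋯S[k-1]` over power series. -/
def QP (L : ℕ) (hL : 0 < L) (f : Fin L → PowerSeries ℂ) (k : ℕ) :
    Matrix (Fin L) (Fin L) (PowerSeries ℂ) :=
  ((List.range k).map fun t => SP L hL f t).prod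

lemma QP_succ (L : ℕ) (hL : 0 < L) (f : Fin L → PowerSeries ℂ) (k : ℕ) :
    QP L hL f (k + 1) = QP L hL f k * SP L hL f k := by
  simp [QP, List.range_succ]

lemma f_eq_QP_mulVec (L : ℕ) (hL : 0 < L) (f : Fin L → PowerSeries ℂ) (K : ℕ)
    (ha : ∀ t < K, ∀ i, uu L f t i ≠ 0) (k : ℕ) (hk : k ≤ K) :
    f = (QP L hL f k).mulVec (cfIter L f k) := by
  induction k with
  | zero =>
    simp only [QP, List.range_zero, List.map_nil, List.prod_nil]
    rw [Matrix.one_mulVec]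
    rfl
  | succ k ih =>
    calc f = (QP L hL f k).mulVec (cfIter L f k) := ih (by omega)
      _ = (QP L hL f k).mulVec ((SP L hL f k).mulVec (cfIter L f (k + 1))) := by
          rw [← iter_eq L hL f k (ha k (by omega))]
      _ = (QP L hL f (k + 1)).mulVec (cfIter L f (k + 1)) := by
          rw [Matrix.mulVec_mulVec, QP_succ]

/-- Rank-one matrices supported on column `0`. -/
def colMat (L : ℕ) (b : Fin L → ℂ) : Matrix (Fin L) (Fin L) ℂ :=
  Matrix.of fun i j => if (j : ℕ) = 0 then b i else 0

lemma colMat_mul (L : ℕ) (hL : 0 < L) (b b' : Fin L → ℂ) :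
    colMat L b * colMat L b' = colMat L (fun i => b i * b' ⟨0, hL⟩) := by
  ext i j
  rw [Matrix.mul_apply, Finset.sum_eq_single (⟨0, hL⟩ : Fin L)]
  · simp [colMat, mul_ite]
  · intro d _ hd
    have h : (d : ℕ) ≠ 0 := fun h => hd (Fin.ext h)
    simp [colMat, h]
  · simp

lemma cc_SP (L : ℕ) (hL : 0 < L) (f : Fin L → PowerSeries ℂ) (t : ℕ) :
    (SP L hL f t).map (PowerSeries.constantCoeff) =
      colMat L (fun i => uu L f t i / uu L f t ⟨L - 1, Nat.sub_lt hL one_pos⟩) := by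
  ext i j
  simp only [SP, genS, colMat, Matrix.map_apply, Matrix.of_apply]
  split_ifs <;> simp

lemma cc_QP (L : ℕ) (hL : 0 < L) (f : Fin L → PowerSeries ℂ) (K : ℕ)
    (ha : ∀ t < K, ∀ i, uu L f t i ≠ 0) :
    ∀ k, 1 ≤ k → k ≤ K → ∃ b : Fin L → ℂ, (∀ i, b i ≠ 0) ∧
      (QP L hL f k).map (PowerSeries.constantCoeff) = colMat L b := by
  intro k
  induction k with
  | zero => omega
  | succ k ih =>
    intro _ hkK
    have hb' : ∀ i, uu L f k i / uu L f k ⟨L - 1, Nat.sub_lt hL one_pos⟩ ≠ 0 := fun i =>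
      div_ne_zero (ha k (by omega) i) (ha k (by omega) _)
    rcases Nat.eq_zero_or_pos k with rfl | hk
    · refine ⟨_, hb', ?_⟩
      have h1 : QP L hL f 1 = SP L hL f 0 := by
        rw [QP, show List.range 1 = [0] from rfl]
        simp
      rw [h1, cc_SP]
    · obtain ⟨b, hb, hQ⟩ := ih hk (by omega)
      refine ⟨fun i => b i * (uu L f k ⟨0, hL⟩ / uu L f k ⟨L - 1, Nat.sub_lt hL one_pos⟩),
        fun i => mul_ne_zero (hb i) (hb' _), ?_⟩
      rw [QP_succ, Matrix.map_mul, hQ, cc_SP, colMat_mul L hL]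

/-- 2×2 minors. -/
def m2 (M : Matrix (Fin L) (Fin L) A) (i i' c c' : Fin L) : A :=
  M i c * M i' c' - M i c' * M i' c

def wt {L : ℕ} (c : Fin L) : ℕ := if (c : ℕ) = 0 then 0 else 1

lemma pow_wt_dvd_genS (L : ℕ) (hL : 0 < L) (φ : ℂ →+* A) (x : A) (u : Fin L → ℂ)
    (i c : Fin L) : x ^ wt c ∣ genS L hL φ x u i c := by
  rcases eq_or_ne ((c : ℕ)) 0 with hc | hc
  · simp [wt, hc]
  · simp only [wt, if_neg hc, pow_one, genS, Matrix.of_apply]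
    split_ifs with h1
    · exact dvd_mul_right _ _
    · exact dvd_zero _

lemma m2_genS_dvd (L : ℕ) (hL : 0 < L) (φ : ℂ →+* A) (x : A) (u : Fin L → ℂ)
    (i i' c c' : Fin L) : x ^ (wt c + wt c') ∣ m2 (genS L hL φ x u) i i' c c' := by
  unfold m2
  apply dvd_sub
  · rw [pow_add]
    exact mul_dvd_mul (pow_wt_dvd_genS L hL φ x u i c) (pow_wt_dvd_genS L hL φ x u i' c')
  · rw [pow_add, mul_comm (x ^ wt c) (x ^ wt c')]
    exact mul_dvd_mul (pow_wt_dvd_genS L hL φ x u i c') (pow_wt_dvd_genS L hL φ x u i' c)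

lemma m2_mul (L : ℕ) (M N : Matrix (Fin L) (Fin L) A) (i i' c c' : Fin L) :
    m2 (M * N) i i' c c' * 2 = ∑ d, ∑ d', m2 M i i' d d' * m2 N d d' c c' := by
  symm
  have e : ∀ p q : Fin L → A, (∑ d, ∑ d', p d * q d') = (∑ d, p d) * (∑ d, q d) :=
    fun p q => (Finset.sum_mul_sum _ _ _ _).symm
  calc (∑ d, ∑ d', m2 M i i' d d' * m2 N d d' c c')
      = (∑ d, ∑ d', (M i d * N d c) * (M i' d' * N d' c'))
        - (∑ d, ∑ d', (M i d * N d c') * (M i' d' * N d' c))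
        - (∑ d, ∑ d', (M i' d * N d c) * (M i d' * N d' c'))
        + (∑ d, ∑ d', (M i' d * N d c') * (M i d' * N d' c)) := by
        rw [← Finset.sum_sub_distrib, ← Finset.sum_sub_distrib, ← Finset.sum_add_distrib]
        apply Finset.sum_congr rfl
        intro d _
        rw [← Finset.sum_sub_distrib, ← Finset.sum_sub_distrib, ← Finset.sum_add_distrib]
        apply Finset.sum_congr rfl
        intro d' _
        unfold m2
        ring
    _ = (M * N) i c * (M * N) i' c' - (M * N) i c' * (M * N) i' c
        - (M * N) i' c * (M * N) i c' + (M * N) i' c' * (M * N) i c := by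
        rw [e, e, e, e]
        simp only [← Matrix.mul_apply]
    _ = m2 (M * N) i i' c c' * 2 := by
        unfold m2
        ring

lemma m2_QP_dvd (L : ℕ) (hL : 0 < L) (f : Fin L → PowerSeries ℂ) (K : ℕ)
    (ha : ∀ t < K, ∀ i, uu L f t i ≠ 0) :
    ∀ k, 1 ≤ k → k ≤ K → ∀ i i' c c' : Fin L,
    (PowerSeries.X : PowerSeries ℂ) ^ (k - 1 + wt c + wt c') ∣ m2 (QP L hL f k) i i' c c' := by
  intro k
  induction k with
  | zero => omega
  | succ k ih =>
    intro _ hkK i i' c c'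
    rcases Nat.eq_zero_or_pos k with rfl | hk
    · rw [show QP L hL f 1 = SP L hL f 0 by
        rw [QP, show List.range 1 = [0] from rfl]; simp]
      simpa [SP] using m2_genS_dvd L hL (PowerSeries.C) PowerSeries.X (uu L f 0) i i' c c'
    · have hdvd2 : (PowerSeries.X : PowerSeries ℂ) ^ (k + wt c + wt c') ∣
          m2 (QP L hL f (k + 1)) i i' c c' * 2 := by
        rw [QP_succ, m2_mul]
        apply Finset.dvd_sum
        intro d _
        apply Finset.dvd_sum
        intro d' _
        by_cases hd : (d : ℕ) = 0 ∧ (d' : ℕ) = 0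
        · have hdd : d = d' := Fin.ext (hd.1.trans hd.2.symm)
          have hz : m2 (QP L hL f k) i i' d d' = 0 := by
            rw [hdd]; unfold m2; ring
          rw [hz, zero_mul]
          exact dvd_zero _
        · have h1 : 1 ≤ wt d + wt d' := by
            unfold wt
            rcases Decidable.em ((d : ℕ) = 0) with h2 | h2 <;>
              rcases Decidable.em ((d' : ℕ) = 0) with h3 | h3
            · exact absurd ⟨h2, h3⟩ hd
            all_goals simp [h2, h3]
          have hle : k + wt c + wt c' ≤ (k - 1 + wt d + wt d') + (wt c + wt c') := by omega
          refine dvd_trans (pow_dvd_pow _ hle) ?_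
          rw [pow_add]
          have hSP : SP L hL f k = genS L hL (PowerSeries.C) PowerSeries.X (uu L f k) := rfl
          rw [hSP]
          exact mul_dvd_mul (ih hk (by omega) i i' d d')
            (m2_genS_dvd L hL (PowerSeries.C) PowerSeries.X (uu L f k) d d' c c')
      obtain ⟨r, hr⟩ := hdvd2
      have h2inv : (2 : PowerSeries ℂ) * PowerSeries.C (2⁻¹ : ℂ) = 1 := by
        rw [show (2 : PowerSeries ℂ) = PowerSeries.C 2 from (map_ofNat (PowerSeries.C) 2).symm,
          ← map_mul]
        norm_num
      have hgoal : m2 (QP L hL f (k + 1)) i i' c c' =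
          (PowerSeries.X : PowerSeries ℂ) ^ (k + wt c + wt c') *
            (r * PowerSeries.C (2⁻¹ : ℂ)) := by
        calc m2 (QP L hL f (k + 1)) i i' c c'
            = m2 (QP L hL f (k + 1)) i i' c c' * (2 * PowerSeries.C (2⁻¹ : ℂ)) := by
              rw [h2inv, mul_one]
          _ = (m2 (QP L hL f (k + 1)) i i' c c' * 2) * PowerSeries.C (2⁻¹ : ℂ) := by ring
          _ = _ := by rw [hr]; ring
      rw [show k + 1 - 1 + wt c + wt c' = k + wt c + wt c' by omega, hgoal]
      exact dvd_mul_right _ _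

lemma numerator_dvd (L : ℕ) (hL : 0 < L) (f : Fin L → PowerSeries ℂ) (K : ℕ)
    (ha : ∀ t < K, ∀ i, uu L f t i ≠ 0) (k : ℕ) (hk1 : 1 ≤ k) (hkK : k ≤ K) (i : Fin L) :
    (PowerSeries.X : PowerSeries ℂ) ^ k ∣
      f i * QP L hL f k ⟨0, hL⟩ ⟨0, hL⟩ - f ⟨0, hL⟩ * QP L hL f k i ⟨0, hL⟩ := by
  have hf := f_eq_QP_mulVec L hL f K ha k hkK
  have hfi : f i = ∑ c, QP L hL f k i c * cfIter L f k c := by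
    conv_lhs => rw [hf]
    rfl
  have hf0 : f ⟨0, hL⟩ = ∑ c, QP L hL f k ⟨0, hL⟩ c * cfIter L f k c := by
    conv_lhs => rw [hf]
    rfl
  rw [hfi, hf0, Finset.sum_mul, Finset.sum_mul, ← Finset.sum_sub_distrib]
  apply Finset.dvd_sum
  intro c _
  rw [show QP L hL f k i c * cfIter L f k c * QP L hL f k ⟨0, hL⟩ ⟨0, hL⟩ -
      QP L hL f k ⟨0, hL⟩ c * cfIter L f k c * QP L hL f k i ⟨0, hL⟩ =
      m2 (QP L hL f k) i ⟨0, hL⟩ c ⟨0, hL⟩ * cfIter L f k c by unfold m2; ring]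
  apply Dvd.dvd.mul_right
  by_cases hc : (c : ℕ) = 0
  · have hc0 : c = ⟨0, hL⟩ := Fin.ext hc
    rw [hc0, show m2 (QP L hL f k) i ⟨0, hL⟩ ⟨0, hL⟩ ⟨0, hL⟩ = 0 by unfold m2; ring]
    exact dvd_zero _
  · have := m2_QP_dvd L hL f K ha k hk1 hkK i ⟨0, hL⟩ c ⟨0, hL⟩
    rwa [show k - 1 + wt c + wt (⟨0, hL⟩ : Fin L) = k by unfold wt; simp [hc]; omega] at this

lemma cfT_inv (L : ℕ) (hL : 0 < L) (g : Fin L → PowerSeries ℂ)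
    (hu : ∀ i, PowerSeries.constantCoeff (g i) ≠ 0) :
    (cfT L g)⁻¹ =
      genS L hL RatFunc.C RatFunc.X (fun i => PowerSeries.constantCoeff (g i)) := by
  apply Matrix.inv_eq_right_inv
  rw [cfT_eq, Matrix.smul_mul, genM_mul_genS L hL RatFunc.C RatFunc.X _ hu, smul_smul,
    inv_mul_cancel₀ RatFunc.X_ne_zero, one_smul]

abbrev coeRH : RatFunc ℂ →+* LaurentSeries ℂ :=
  @algebraMap _ _ _ _ (RatFunc.liftAlgebra ℂ (LaurentSeries ℂ))

lemma sigma_comp_C :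
    coeRH.comp RatFunc.C
      = (HahnSeries.ofPowerSeries ℤ ℂ).comp (PowerSeries.C) := by
  apply RingHom.ext
  intro c
  show coeRH (RatFunc.C c) = (HahnSeries.ofPowerSeries ℤ ℂ) (PowerSeries.C c)
  rw [← Polynomial.coe_C, RatFunc.coe_coe, ← RatFunc.algebraMap_C]
  rfl

lemma sigma_X :
    coeRH RatFunc.X = (HahnSeries.ofPowerSeries ℤ ℂ) PowerSeries.X := by
  show ((RatFunc.X : RatFunc ℂ) : LaurentSeries ℂ) = _
  rw [RatFunc.coe_X, HahnSeries.ofPowerSeries_X]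

lemma mulVec_map {A B : Type*} [CommRing A] [CommRing B] (ψ : A →+* B) {n : Type*} [Fintype n]
    (M : Matrix n n A) (v : n → A) (i : n) :
    ψ (M.mulVec v i) = (M.map ψ).mulVec (fun j => ψ (v j)) i := by
  simp [Matrix.mulVec, dotProduct, map_sum, map_mul]

lemma mulVec_e0 {A : Type*} [CommRing A] {n : Type*} [Fintype n] [DecidableEq n]
    (M : Matrix n n A) (j0 : n) :
    M.mulVec (fun j => if j = j0 then 1 else 0) = fun i => M i j0 := by
  funext i
  show ∑ j, M i j * (if j = j0 then 1 else 0) = M i j0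
  rw [Finset.sum_eq_single j0]
  · simp
  · intro d _ hd
    simp [hd]
  · simp

lemma QR_map (L : ℕ) (hL : 0 < L) (f : Fin L → PowerSeries ℂ) (m : ℕ) :
    ((((List.range m).map fun t =>
        genS L hL RatFunc.C RatFunc.X (uu L f t)).prod).map
          coeRH)
      = (QP L hL f m).map (HahnSeries.ofPowerSeries ℤ ℂ) := by
  induction m with
  | zero =>
    simp only [List.range_zero, List.map_nil, List.prod_nil, QP]
    rw [Matrix.map_one _ (map_zero _) (map_one _), Matrix.map_one _ (map_zero _) (map_one _)]
  | succ m ih =>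
    rw [List.range_succ, List.map_append, List.prod_append, List.map_singleton,
      List.prod_singleton, Matrix.map_mul, ih, QP_succ, Matrix.map_mul]
    congr 1
    rw [map_genS, sigma_X, sigma_comp_C, SP, ← map_genS]

end CFAux

/-- The `k`th convergent of the vector continued fraction approximates
`φ = ᵀ(f_1/f_0, …, f_{L-1}/f_0)` to order `w^k`. -/
theorem cf_convergents (L : ℕ) (hL : 2 ≤ L) [NeZero L]
    (f : Fin L → PowerSeries ℂ) (hf0 : PowerSeries.constantCoeff (f 0) ≠ 0)
    (K : ℕ) (hK : 1 ≤ K)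
    (ha : ∀ k < K, ∀ i : Fin L, PowerSeries.constantCoeff (cfIter L f k i) ≠ 0)
    (k : ℕ) (hk1 : 1 ≤ k) (hkK : k ≤ K) :
    let ϖ : Fin L → RatFunc ℂ :=
      Matrix.mulVec (((List.range k).map fun t => (cfT L (cfIter L f t))⁻¹).prod)
        (fun i => if i = 0 then 1 else 0)
    (∀ i : Fin L, ∀ t : ℤ, t < 0 → ((ϖ i : LaurentSeries ℂ)).coeff t = 0) ∧
    ((ϖ 0 : LaurentSeries ℂ)).coeff 0 ≠ 0 ∧
    (∀ i : Fin L, 1 ≤ (i : ℕ) → ∀ t : ℤ, t < (k : ℤ) →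
      (((HahnSeries.ofPowerSeries ℤ ℂ) (f i * (f 0)⁻¹) : LaurentSeries ℂ)
          - ((ϖ i / ϖ 0 : RatFunc ℂ) : LaurentSeries ℂ)).coeff t = 0) := by
  classical
  have hL0 : 0 < L := by omega
  intro ϖ
  have haK : ∀ t < K, ∀ i, CFAux.uu L f t i ≠ 0 := fun t ht i => ha t ht i
  have h00 : (0 : Fin L) = (⟨0, hL0⟩ : Fin L) := Fin.ext (Fin.val_zero L)
  have hinj : Function.Injective (HahnSeries.ofPowerSeries ℤ ℂ) :=
    HahnSeries.ofPowerSeries_injective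
  have hlist : (List.range k).map (fun t => (cfT L (cfIter L f t))⁻¹)
      = (List.range k).map (fun t => CFAux.genS L hL0 RatFunc.C RatFunc.X (CFAux.uu L f t)) := by
    apply List.map_congr_left
    intro t ht
    exact CFAux.cfT_inv L hL0 (cfIter L f t)
      (fun i => ha t (lt_of_lt_of_le (List.mem_range.mp ht) hkK) i)
  have hϖcoe : ∀ i, ((ϖ i : RatFunc ℂ) : LaurentSeries ℂ)
      = ((CFAux.QP L hL0 f k i (0 : Fin L) : PowerSeries ℂ) : LaurentSeries ℂ) := by
    intro i
    have e1 : ((ϖ i : RatFunc ℂ) : LaurentSeries ℂ)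
        = CFAux.coeRH (ϖ i) := rfl
    rw [e1]
    show CFAux.coeRH
      (Matrix.mulVec (((List.range k).map fun t => (cfT L (cfIter L f t))⁻¹).prod)
        (fun i => if i = 0 then 1 else 0) i)
      = (HahnSeries.ofPowerSeries ℤ ℂ) (CFAux.QP L hL0 f k i (0 : Fin L))
    rw [hlist, CFAux.mulVec_map, CFAux.QR_map L hL0 f k]
    have he0 : (fun j : Fin L => CFAux.coeRH (if j = 0 then 1 else 0))
        = (fun j : Fin L =>
            (HahnSeries.ofPowerSeries ℤ ℂ) (if j = 0 then (1 : PowerSeries ℂ) else 0)) := by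
      funext j
      split_ifs <;> simp
    rw [he0, ← CFAux.mulVec_map (HahnSeries.ofPowerSeries ℤ ℂ) (CFAux.QP L hL0 f k) _ i]
    congr 1
    exact congrFun (CFAux.mulVec_e0 (CFAux.QP L hL0 f k) (0 : Fin L)) i
  obtain ⟨b, hb, hQcc⟩ := CFAux.cc_QP L hL0 f K haK k hk1 hkK
  have hπcc : ∀ i, PowerSeries.constantCoeff (CFAux.QP L hL0 f k i (0 : Fin L)) ≠ 0 := by
    intro i
    have e2 : PowerSeries.constantCoeff (CFAux.QP L hL0 f k i (0 : Fin L))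
        = ((CFAux.QP L hL0 f k).map (PowerSeries.constantCoeff)) i (0 : Fin L) := rfl
    rw [e2, hQcc]
    have e3 : ((0 : Fin L) : ℕ) = 0 := Fin.val_zero L
    simpa [CFAux.colMat, e3] using hb i
  refine ⟨?_, ?_, ?_⟩
  · intro i t ht
    rw [hϖcoe i, PowerSeries.coeff_coe, if_pos ht]
  · rw [hϖcoe 0, PowerSeries.coeff_coe, if_neg (by norm_num)]
    simpa using hπcc 0
  · intro i hi1 t htk
    have hf0ne : f 0 ≠ 0 := fun h => hf0 (by rw [h]; simp)
    have hπ0ne : CFAux.QP L hL0 f k (0 : Fin L) (0 : Fin L) ≠ 0 :=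
      fun h => hπcc 0 (by rw [h]; simp)
    have hbne : ((f 0 : PowerSeries ℂ) : LaurentSeries ℂ) ≠ 0 :=
      fun h => hf0ne (hinj (by rw [show (HahnSeries.ofPowerSeries ℤ ℂ) (f 0)
        = ((f 0 : PowerSeries ℂ) : LaurentSeries ℂ) from rfl, h, map_zero]))
    have hqne : ((CFAux.QP L hL0 f k (0 : Fin L) (0 : Fin L) : PowerSeries ℂ)
        : LaurentSeries ℂ) ≠ 0 :=
      fun h => hπ0ne (hinj (by rw [show (HahnSeries.ofPowerSeries ℤ ℂ)
        (CFAux.QP L hL0 f k (0 : Fin L) (0 : Fin L))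
        = ((CFAux.QP L hL0 f k (0 : Fin L) (0 : Fin L) : PowerSeries ℂ)
          : LaurentSeries ℂ) from rfl, h, map_zero]))
    have hN := CFAux.numerator_dvd L hL0 f K haK k hk1 hkK i
    rw [← h00] at hN
    set N : PowerSeries ℂ := f i * CFAux.QP L hL0 f k (0 : Fin L) (0 : Fin L)
      - f 0 * CFAux.QP L hL0 f k i (0 : Fin L) with hNdef
    set D : PowerSeries ℂ := f 0 * CFAux.QP L hL0 f k (0 : Fin L) (0 : Fin L) with hDdef
    have hDcc : PowerSeries.constantCoeff D ≠ 0 := by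
      rw [hDdef, map_mul]
      exact mul_ne_zero hf0 (hπcc 0)
    have hιinv : ∀ g : PowerSeries ℂ, PowerSeries.constantCoeff g ≠ 0 →
        ((g⁻¹ : PowerSeries ℂ) : LaurentSeries ℂ) = ((g : PowerSeries ℂ) : LaurentSeries ℂ)⁻¹ := by
      intro g hg
      refine eq_inv_of_mul_eq_one_left ?_
      rw [← PowerSeries.coe_mul, PowerSeries.inv_mul_cancel g hg, PowerSeries.coe_one]
    have hident : (HahnSeries.ofPowerSeries ℤ ℂ) (f i * (f 0)⁻¹)
        - ((ϖ i / ϖ 0 : RatFunc ℂ) : LaurentSeries ℂ)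
        = ((N * D⁻¹ : PowerSeries ℂ) : LaurentSeries ℂ) := by
      have hdiv : ((ϖ i / ϖ 0 : RatFunc ℂ) : LaurentSeries ℂ)
          = ((CFAux.QP L hL0 f k i (0 : Fin L) : PowerSeries ℂ) : LaurentSeries ℂ)
            / ((CFAux.QP L hL0 f k (0 : Fin L) (0 : Fin L) : PowerSeries ℂ)
              : LaurentSeries ℂ) := by
        rw [map_div₀, hϖcoe i, hϖcoe 0]
      show ((f i * (f 0)⁻¹ : PowerSeries ℂ) : LaurentSeries ℂ) - _ = _
      rw [hdiv, PowerSeries.coe_mul, PowerSeries.coe_mul, hιinv _ hf0, hιinv _ hDcc, hDdef,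
        hNdef, PowerSeries.coe_mul, PowerSeries.coe_sub, PowerSeries.coe_mul,
        PowerSeries.coe_mul]
      field_simp
    rw [hident]
    have hdvd : (PowerSeries.X : PowerSeries ℂ) ^ k ∣ N * D⁻¹ := Dvd.dvd.mul_right hN _
    rw [PowerSeries.coeff_coe]
    split_ifs with hneg
    · rfl
    · apply PowerSeries.X_pow_dvd_iff.mp hdvd
      omega
end
end

section
/- Suppose that in the vector continued fraction algorithm all constant terms a^i[k] are nonzero for 0 ≤ i ≤ L−1 and 0 ≤ k ≤ L−1. Then the matrix 𝒬(w) := w^L·T[L−1]·T[L−2]⋯T[1]·T[0] is an L×L matrix of polynomials in w such that: each diagonal entry 𝒬_{ii} is a monic polynomial of degree 1; each strictly upper triangular entry 𝒬_{ij} (i < j) is of the form c·w with c ∈ ℂ; each strictly lower triangular entry 𝒬_{ij} (i > j) is a constant; and 𝒬(w)·f = O(w^L) componentwise. In particular, the rows of 𝒬(w) constitute a solution of the Hermite–Padé approximation problem for (f_0, …, f_{L−1}) with n = 1. -/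
noncomputable section

namespace CFaux

open PowerSeries

variable {L : ℕ}

/-- previous index -/
def iprev (i : Fin L) : Fin L := ⟨(i:ℕ) - 1, lt_of_le_of_lt (Nat.sub_le _ _) i.isLt⟩

/-- the constant in row i -/
def aval (g : Fin L → PowerSeries ℂ) (i : Fin L) : ℂ :=
  PowerSeries.constantCoeff (g (iprev i)) / PowerSeries.constantCoeff (g i)

lemma row_zero (hL : 0 < L) (g v : Fin L → PowerSeries ℂ) (i : Fin L) (hi : (i:ℕ) = 0) :
    ∑ m, cfM L g i m * v m = PowerSeries.X * v ⟨L-1, Nat.sub_lt hL one_pos⟩ := by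
  rw [Finset.sum_eq_single (⟨L-1, Nat.sub_lt hL one_pos⟩ : Fin L)]
  · simp [cfM, hi]
  · intro m _ hm
    have hm' : (m:ℕ) ≠ L-1 := fun h => hm (Fin.ext h)
    simp [cfM, hi, hm']
  · simp

lemma row_pos (g v : Fin L → PowerSeries ℂ) (i : Fin L) (hi : (i:ℕ) ≠ 0) :
    ∑ m, cfM L g i m * v m = v (iprev i) - PowerSeries.C (aval g i) * v i := by
  have h1 : iprev i ≠ i := by
    simp only [iprev, Fin.ne_iff_vne]; simp; omega
  rw [Fintype.sum_eq_add (iprev i) i h1]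
  · have e1 : cfM L g i (iprev i) = 1 := by
      have : ((iprev i : Fin L) : ℕ) + 1 = (i:ℕ) := by simp [iprev]; omega
      simp [cfM, hi, this]
    have e2 : cfM L g i i = - PowerSeries.C (aval g i) := by
      have h2 : ¬ ((i:ℕ) + 1 = (i:ℕ)) := by omega
      simp [cfM, hi, h2, aval, iprev]
    rw [e1, e2]; ring
  · intro m ⟨hm1, hm2⟩
    have hn1 : ¬ ((m:ℕ) + 1 = (i:ℕ)) := by
      intro h
      exact hm1 (by simp [iprev, Fin.ext_iff]; omega)
    have hn2 : m ≠ i := hm2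
    simp [cfM, hi, hn1, hn2]

lemma mulVec_eq_sum (M : Matrix (Fin L) (Fin L) (PowerSeries ℂ)) (v : Fin L → PowerSeries ℂ)
    (i : Fin L) : M.mulVec v i = ∑ m, M i m * v m := by
  simp [Matrix.mulVec, dotProduct]

lemma step_mulVec (hL : 0 < L) (g : Fin L → PowerSeries ℂ)
    (hg : ∀ i, PowerSeries.constantCoeff (g i) ≠ 0) :
    (cfM L g).mulVec g = fun i => PowerSeries.X * cfStep L g i := by
  funext i
  rw [mulVec_eq_sum]
  have h0 : (PowerSeries.coeff 0) (∑ m, cfM L g i m * g m) = 0 := by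
    rcases Nat.eq_zero_or_pos (i:ℕ) with hi | hi
    · rw [row_zero hL g g i hi]
      simp
    · rw [row_pos g g i (Nat.pos_iff_ne_zero.mp hi)]
      simp only [map_sub, map_mul, PowerSeries.coeff_zero_eq_constantCoeff, constantCoeff_C,
        aval]
      rw [div_mul_cancel₀ _ (hg i)]; ring
  ext n
  cases n with
  | zero =>
    rw [h0]
    simp
  | succ n =>
    rw [PowerSeries.coeff_succ_X_mul]
    simp [cfStep]

/-- partial product `M[k-1]⋯M[0]` -/
def Pmat (L : ℕ) (f : Fin L → PowerSeries ℂ) (k : ℕ) : Matrix (Fin L) (Fin L) (PowerSeries ℂ) :=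
  (((List.range k).reverse.map fun t => cfM L (cfIter L f t)).prod)

lemma Pmat_zero (f : Fin L → PowerSeries ℂ) : Pmat L f 0 = 1 := by simp [Pmat]

lemma Pmat_succ (f : Fin L → PowerSeries ℂ) (k : ℕ) :
    Pmat L f (k+1) = cfM L (cfIter L f k) * Pmat L f k := by
  simp [Pmat, List.range_succ]

lemma Pmat_mulVec (hL : 0 < L) (f : Fin L → PowerSeries ℂ) (k : ℕ) (hk : k ≤ L)
    (ha : ∀ k' < L, ∀ i : Fin L, PowerSeries.constantCoeff (cfIter L f k' i) ≠ 0) :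
    (Pmat L f k).mulVec f = fun i => PowerSeries.X ^ k * cfIter L f k i := by
  induction k with
  | zero => funext i; simp [Pmat_zero, Matrix.one_mulVec, cfIter]
  | succ k ih =>
    have hk' : k ≤ L := Nat.le_of_succ_le hk
    rw [Pmat_succ, ← Matrix.mulVec_mulVec, ih hk']
    funext i
    have e1 : (cfM L (cfIter L f k)).mulVec (fun m => PowerSeries.X ^ k * cfIter L f k m) i
        = PowerSeries.X ^ k * (cfM L (cfIter L f k)).mulVec (cfIter L f k) i := by
      rw [mulVec_eq_sum, mulVec_eq_sum, Finset.mul_sum]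
      congr 1; funext m; ring
    rw [e1, step_mulVec hL _ (ha k (by omega))]
    show PowerSeries.X ^ k * (PowerSeries.X * cfStep L (cfIter L f k) i) = _
    rw [show cfIter L f (k+1) = cfStep L (cfIter L f k) from rfl]
    ring

/-- Shape invariant for the partial products, valid for `k ≤ L - 1`. -/
def Inv (L k : ℕ) (P : Matrix (Fin L) (Fin L) (PowerSeries ℂ)) : Prop :=
  ∀ i j : Fin L,
    (((i:ℕ):ℤ) - ((j:ℕ):ℤ) = (k:ℤ) - (L:ℤ) → P i j = PowerSeries.X) ∧
    (((i:ℕ):ℤ) - ((j:ℕ):ℤ) = (k:ℤ) → P i j = 1) ∧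
    (0 ≤ ((i:ℕ):ℤ) - ((j:ℕ):ℤ) ∧ ((i:ℕ):ℤ) - ((j:ℕ):ℤ) < (k:ℤ) →
      ∃ c : ℂ, P i j = PowerSeries.C c) ∧
    (((i:ℕ):ℤ) - ((j:ℕ):ℤ) < (k:ℤ) - (L:ℤ) →
      ∃ c : ℂ, P i j = PowerSeries.C c * PowerSeries.X) ∧
    (((k:ℤ) - (L:ℤ) < ((i:ℕ):ℤ) - ((j:ℕ):ℤ) ∧ ((i:ℕ):ℤ) - ((j:ℕ):ℤ) < 0) ∨
      (k:ℤ) < ((i:ℕ):ℤ) - ((j:ℕ):ℤ) → P i j = 0)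

namespace Inv

variable {k : ℕ} {P : Matrix (Fin L) (Fin L) (PowerSeries ℂ)}

lemma eq_X (hP : Inv L k P) {i j : Fin L} (h : ((i:ℕ):ℤ) - ((j:ℕ):ℤ) = (k:ℤ) - (L:ℤ)) :
    P i j = PowerSeries.X := (hP i j).1 h

lemma eq_one (hP : Inv L k P) {i j : Fin L} (h : ((i:ℕ):ℤ) - ((j:ℕ):ℤ) = (k:ℤ)) :
    P i j = 1 := (hP i j).2.1 h

lemma eq_zero (hP : Inv L k P) {i j : Fin L}
    (h : ((k:ℤ) - (L:ℤ) < ((i:ℕ):ℤ) - ((j:ℕ):ℤ) ∧ ((i:ℕ):ℤ) - ((j:ℕ):ℤ) < 0) ∨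
      (k:ℤ) < ((i:ℕ):ℤ) - ((j:ℕ):ℤ)) : P i j = 0 := (hP i j).2.2.2.2 h

/-- constant entries, including the saturated boundary `d = k`. -/
lemma const (hP : Inv L k P) {i j : Fin L} (h0 : 0 ≤ ((i:ℕ):ℤ) - ((j:ℕ):ℤ))
    (h1 : ((i:ℕ):ℤ) - ((j:ℕ):ℤ) ≤ (k:ℤ)) : ∃ c : ℂ, P i j = PowerSeries.C c := by
  rcases eq_or_lt_of_le h1 with h | h
  · exact ⟨1, by rw [hP.eq_one h]; simp⟩
  · exact (hP i j).2.2.1 ⟨h0, h⟩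

/-- `X`-multiple entries, including the saturated boundary `d = k - L`. -/
lemma xmul (hP : Inv L k P) {i j : Fin L}
    (h1 : ((i:ℕ):ℤ) - ((j:ℕ):ℤ) ≤ (k:ℤ) - (L:ℤ)) :
    ∃ c : ℂ, P i j = PowerSeries.C c * PowerSeries.X := by
  rcases eq_or_lt_of_le h1 with h | h
  · exact ⟨1, by rw [hP.eq_X h]; simp⟩
  · exact (hP i j).2.2.2.1 h

/-- constant entries, allowing `d = -1` (then zero), provided `k - L < -1`. -/
lemma const' (hP : Inv L k P) {i j : Fin L}
    (hm : -1 ≤ ((i:ℕ):ℤ) - ((j:ℕ):ℤ)) (h1 : ((i:ℕ):ℤ) - ((j:ℕ):ℤ) ≤ (k:ℤ))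
    (hkL : (k:ℤ) - (L:ℤ) < -1) : ∃ c : ℂ, P i j = PowerSeries.C c := by
  rcases eq_or_lt_of_le hm with h | h
  · exact ⟨0, by rw [hP.eq_zero (Or.inl ⟨by omega, by omega⟩)]; simp⟩
  · exact hP.const (by omega) h1

end Inv

lemma inv_base (f : Fin L → PowerSeries ℂ) : Inv L 0 (Pmat L f 0) := by
  rw [Pmat_zero]
  intro i j
  have hi := i.isLt
  have hj := j.isLt
  refine ⟨fun h => absurd h (by omega), fun h => ?_, fun h => absurd h (by omega),
    fun h => absurd h (by omega), fun h => ?_⟩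
  · have : i = j := Fin.ext (by omega)
    simp [this, Matrix.one_apply]
  · have : i ≠ j := fun hij => by subst hij; omega
    simp [Matrix.one_apply, this]

lemma inv_step (hL : 2 ≤ L) {k : ℕ} (hk : k + 1 ≤ L - 1) (g : Fin L → PowerSeries ℂ)
    {P : Matrix (Fin L) (Fin L) (PowerSeries ℂ)} (hP : Inv L k P) :
    Inv L (k+1) (cfM L g * P) := by
  have hL0 : 0 < L := by omega
  intro i j
  have hi := i.isLt
  have hj := j.isLt
  rcases Nat.eq_zero_or_pos (i:ℕ) with hi0 | hi0
  · -- row 0 : entry = X * P (L-1) j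
    have hrow : (cfM L g * P) i j = PowerSeries.X * P ⟨L-1, Nat.sub_lt hL0 one_pos⟩ j := by
      rw [Matrix.mul_apply]; exact row_zero hL0 g (fun m => P m j) i hi0
    have hcoeL : (((⟨L-1, Nat.sub_lt hL0 one_pos⟩ : Fin L) : ℕ) : ℤ) = (L:ℤ) - 1 := by
      simp; omega
    refine ⟨fun h => ?_, fun h => absurd h (by omega), fun h => ?_, fun h => ?_, fun h => ?_⟩
    · -- d = k+1-L : X * 1
      rw [hrow, hP.eq_one (by rw [hcoeL]; omega), mul_one]
    · -- 0 ≤ d < k+1 : here d = 0, and P (L-1) j = 0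
      refine ⟨0, ?_⟩
      rw [hrow, hP.eq_zero (Or.inr (by rw [hcoeL]; omega))]
      simp
    · -- d < k+1-L : X * const
      obtain ⟨c, hc⟩ := hP.const (i := ⟨L-1, Nat.sub_lt hL0 one_pos⟩) (j := j)
        (by rw [hcoeL]; omega) (by rw [hcoeL]; omega)
      exact ⟨c, by rw [hrow, hc]; ring⟩
    · -- zero region
      rw [hrow, hP.eq_zero (Or.inr (by rw [hcoeL]; omega)), mul_zero]
  · -- rows i ≥ 1 : entry = P (i-1) j - C a * P i j
    have hi0' : (i:ℕ) ≠ 0 := by omega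
    have hrow : (cfM L g * P) i j = P (iprev i) j - PowerSeries.C (aval g i) * P i j := by
      rw [Matrix.mul_apply]; exact row_pos g (fun m => P m j) i hi0'
    have hcoe : (((iprev i : Fin L) : ℕ) : ℤ) = ((i:ℕ):ℤ) - 1 := by
      simp [iprev]; omega
    refine ⟨fun h => ?_, fun h => ?_, fun h => ?_, fun h => ?_, fun h => ?_⟩
    · -- d = k+1-L : X - C a * 0
      rw [hrow, hP.eq_X (by rw [hcoe]; omega),
        hP.eq_zero (i := i) (j := j) (Or.inl ⟨by omega, by omega⟩)]
      ring
    · -- d = k+1 : 1 - C a * 0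
      rw [hrow, hP.eq_one (by rw [hcoe]; omega),
        hP.eq_zero (i := i) (j := j) (Or.inr (by omega))]
      ring
    · -- 0 ≤ d ≤ k : const - C a * const
      obtain ⟨c1, hc1⟩ := hP.const' (i := iprev i) (j := j)
        (by rw [hcoe]; omega) (by rw [hcoe]; omega) (by omega)
      obtain ⟨c2, hc2⟩ := hP.const (i := i) (j := j) (by omega) (by omega)
      refine ⟨c1 - aval g i * c2, ?_⟩
      rw [hrow, hc1, hc2, map_sub, map_mul]
    · -- d ≤ k-L : CX - C a * CX
      obtain ⟨c1, hc1⟩ := hP.xmul (i := iprev i) (j := j) (by rw [hcoe]; omega)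
      obtain ⟨c2, hc2⟩ := hP.xmul (i := i) (j := j) (by omega)
      refine ⟨c1 - aval g i * c2, ?_⟩
      rw [hrow, hc1, hc2, map_sub, map_mul]
      ring
    · -- zero region
      rcases h with h | h
      · rw [hrow, hP.eq_zero (i := iprev i) (j := j) (Or.inl ⟨by rw [hcoe]; omega, by rw [hcoe]; omega⟩),
          hP.eq_zero (i := i) (j := j) (Or.inl ⟨by omega, by omega⟩)]
        ring
      · rw [hrow, hP.eq_zero (i := iprev i) (j := j) (Or.inr (by rw [hcoe]; omega)),
          hP.eq_zero (i := i) (j := j) (Or.inr (by omega))]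
        ring

lemma inv_all (hL : 2 ≤ L) (f : Fin L → PowerSeries ℂ) {k : ℕ} (hk : k ≤ L - 1) :
    Inv L k (Pmat L f k) := by
  induction k with
  | zero => exact inv_base f
  | succ k ih =>
    rw [Pmat_succ]
    exact inv_step hL hk _ (ih (by omega))

lemma coeff_X_pow_mul_of_lt {n t : ℕ} (h : t < n) (φ : PowerSeries ℂ) :
    PowerSeries.coeff t (PowerSeries.X ^ n * φ) = 0 := by
  rw [PowerSeries.coeff_mul]
  apply Finset.sum_eq_zero
  intro p hp
  rw [Finset.HasAntidiagonal.mem_antidiagonal] at hp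
  rw [PowerSeries.coeff_X_pow, if_neg (by omega), zero_mul]

end CFaux

open CFaux

/-- The matrix `𝒬(w) = w^L·T[L-1]⋯T[1]T[0] = M[L-1]⋯M[1]M[0]` is a polynomial matrix
with monic linear diagonal, `w`-multiple strictly upper part, constant strictly lower part,
and `𝒬·f = O(w^L)`; its rows solve the Hermite–Padé problem with `n = 1`. -/
theorem cf_gives_HP (L : ℕ) (hL : 2 ≤ L) [NeZero L]
    (f : Fin L → PowerSeries ℂ) (hf0 : PowerSeries.constantCoeff (f 0) ≠ 0)
    (ha : ∀ k < L, ∀ i : Fin L, PowerSeries.constantCoeff (cfIter L f k i) ≠ 0) :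
    let Qm : Matrix (Fin L) (Fin L) (PowerSeries ℂ) :=
      (((List.range L).reverse.map fun t => cfM L (cfIter L f t)).prod)
    (∀ i : Fin L, ∃ c : ℂ, Qm i i = PowerSeries.C c + PowerSeries.X) ∧
    (∀ i j : Fin L, (i : ℕ) < (j : ℕ) → ∃ c : ℂ, Qm i j = PowerSeries.C c * PowerSeries.X) ∧
    (∀ i j : Fin L, (j : ℕ) < (i : ℕ) → ∃ c : ℂ, Qm i j = PowerSeries.C c) ∧
    (∀ i : Fin L, ∀ t < L, PowerSeries.coeff t (∑ j, Qm i j * f j) = 0) := by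
  intro Qm
  have hL0 : 0 < L := by omega
  set g := cfIter L f (L-1) with hg
  set P := Pmat L f (L-1) with hPdef
  have hP : Inv L (L-1) P := inv_all hL f le_rfl
  have hQ : Qm = cfM L g * P := by
    have h1 : L - 1 + 1 = L := by omega
    calc Qm = Pmat L f L := rfl
    _ = Pmat L f (L-1+1) := by rw [h1]
    _ = _ := Pmat_succ f (L-1)
  have hlast : (((⟨L-1, Nat.sub_lt hL0 one_pos⟩ : Fin L) : ℕ) : ℤ) = (L:ℤ) - 1 := by
    simp; omega
  have hrow0 : ∀ j : Fin L, ∀ i : Fin L, (i:ℕ) = 0 →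
      Qm i j = PowerSeries.X * P ⟨L-1, Nat.sub_lt hL0 one_pos⟩ j := by
    intro j i hi0
    rw [hQ, Matrix.mul_apply]
    exact row_zero hL0 g (fun m => P m j) i hi0
  have hrowp : ∀ j : Fin L, ∀ i : Fin L, (i:ℕ) ≠ 0 →
      Qm i j = P (iprev i) j - PowerSeries.C (aval g i) * P i j := by
    intro j i hi0
    rw [hQ, Matrix.mul_apply]
    exact row_pos g (fun m => P m j) i hi0
  have hcoe : ∀ i : Fin L, (i:ℕ) ≠ 0 → (((iprev i : Fin L) : ℕ) : ℤ) = ((i:ℕ):ℤ) - 1 := by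
    intro i hi; simp [iprev]; omega
  have hkL : ((L - 1 : ℕ) : ℤ) = (L : ℤ) - 1 := by omega
  refine ⟨?_, ?_, ?_, ?_⟩
  · -- diagonal
    intro i
    have hi := i.isLt
    rcases Nat.eq_zero_or_pos (i:ℕ) with hi0 | hi0
    · refine ⟨0, ?_⟩
      rw [hrow0 i i hi0, hP.eq_one (by rw [hlast]; omega)]
      simp
    · have hi0' : (i:ℕ) ≠ 0 := by omega
      obtain ⟨c, hc⟩ := hP.const (i := i) (j := i) (by omega) (by rw [hkL]; omega)
      refine ⟨-(aval g i * c), ?_⟩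
      rw [hrowp i i hi0', hP.eq_X (by rw [hcoe i hi0', hkL]; omega), hc, map_neg, map_mul]
      ring
  · -- strictly upper
    intro i j hij
    have hi := i.isLt
    have hj := j.isLt
    rcases Nat.eq_zero_or_pos (i:ℕ) with hi0 | hi0
    · obtain ⟨c, hc⟩ := hP.const (i := ⟨L-1, Nat.sub_lt hL0 one_pos⟩) (j := j)
        (by rw [hlast]; omega) (by rw [hlast]; omega)
      refine ⟨c, ?_⟩
      rw [hrow0 j i hi0, hc]
      ring
    · have hi0' : (i:ℕ) ≠ 0 := by omega
      obtain ⟨c1, hc1⟩ := hP.xmul (i := iprev i) (j := j) (by rw [hcoe i hi0', hkL]; omega)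
      obtain ⟨c2, hc2⟩ := hP.xmul (i := i) (j := j) (by rw [hkL]; omega)
      refine ⟨c1 - aval g i * c2, ?_⟩
      rw [hrowp j i hi0', hc1, hc2, map_sub, map_mul]
      ring
  · -- strictly lower
    intro i j hji
    have hi := i.isLt
    have hj := j.isLt
    have hi0' : (i:ℕ) ≠ 0 := by omega
    obtain ⟨c1, hc1⟩ := hP.const (i := iprev i) (j := j)
      (by rw [hcoe i hi0']; omega) (by rw [hcoe i hi0', hkL]; omega)
    obtain ⟨c2, hc2⟩ := hP.const (i := i) (j := j) (by omega) (by rw [hkL]; omega)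
    refine ⟨c1 - aval g i * c2, ?_⟩
    rw [hrowp j i hi0', hc1, hc2, map_sub, map_mul]
  · -- O(w^L)
    intro i t ht
    have hv := Pmat_mulVec hL0 f L le_rfl ha
    have : ∑ j, Qm i j * f j = (Pmat L f L).mulVec f i := (mulVec_eq_sum _ f i).symm
    rw [this, hv]
    exact coeff_X_pow_mul_of_lt ht _
end
end

section
/- Let L ≥ 2, n ≥ 1, m = n(L−1), and let {h^k_j}_{j≥0} ⊂ ℂ (0 ≤ k ≤ L−1) be sequences satisfying the contiguity relation h^1_j + h^2_j + ⋯ + h^{L−1}_j = h^0_j − h^0_{j+1} for all j ≥ 0. Set f_l(w) := Σ_{j≥0} h^l_j w^j for 1 ≤ l ≤ L−1. Define P_0(w) := det of the (m+1)×(m+1) matrix with first row (1, w, …, w^m) and remaining rows the stacked blocks A^1_m(n,m+1), …, A^{L−1}_m(n,m+1), and P_l(w) := [f_l·P_0]_0^{m−1} for 1 ≤ l ≤ L−1. Then h^0_0·P_0(1) − Σ_{l=1}^{L−1} P_l(1) = det of the (m+1)×(m+1) matrix with first row (h^0_m, h^0_{m−1}, …, h^0_1, h^0_0) and remaining rows the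 stacked blocks A^1_m(n,m+1), …, A^{L−1}_m(n,m+1). -/
noncomputable section

lemma detRowExpand {n' : Type*} [DecidableEq n'] [Fintype n'] {R : Type*} [CommRing R]
    {ι : Type*} (M : Matrix n' n' R) (j : n') (s : Finset ι) (v : ι → R) (u : ι → n' → R) :
    (M.updateRow j (∑ i ∈ s, v i • u i)).det = ∑ i ∈ s, v i * (M.updateRow j (u i)).det := by
  classical
  induction s using Finset.induction_on with
  | empty =>
      simp only [Finset.sum_empty]
      exact Matrix.det_eq_zero_of_row_eq_zero j (fun c => by simp)
  | insert _ _ hk ih =>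
      rw [Finset.sum_insert hk, Matrix.det_updateRow_add, Matrix.det_updateRow_smul, ih,
        Finset.sum_insert hk]

lemma expandRow {N : ℕ} {R : Type*} [CommRing R] (B : Matrix (Fin N) (Fin N) R) (j : Fin N)
    (v : Fin N → R) :
    Matrix.det (B.updateRow j v)
      = ∑ cv : Fin N, v cv * (B.updateRow j (fun c' => if c' = cv then 1 else 0)).det := by
  conv_lhs => rw [pi_eq_sum_univ v, detRowExpand]
  apply Finset.sum_congr rfl
  intro cv _
  congr 2
  funext c'
  simp [eq_comm]

lemma indcast {R : Type*} [Zero R] [One R] {N : ℕ} (cv : Fin N) :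
    (fun c' : Fin N => if c' = cv then (1 : R) else 0)
      = fun c' : Fin N => if (c' : ℕ) = (cv : ℕ) then 1 else 0 := by
  funext c'; simp [Fin.ext_iff]

lemma conv_sum (M : ℕ) (g p : ℕ → ℂ) :
    ∑ j ∈ Finset.range M, ∑ k ∈ Finset.range (j + 1), g k * p (j - k)
      = ∑ c ∈ Finset.range M, (∑ k ∈ Finset.range (M - c), g k) * p c := by
  induction M with
  | zero => simp
  | succ M ih =>
      rw [Finset.sum_range_succ, ih]
      have h1 : ∑ k ∈ Finset.range (M + 1), g k * p (M - k)
          = ∑ c ∈ Finset.range (M + 1), g (M - c) * p c := by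
        rw [← Finset.sum_range_reflect]
        apply Finset.sum_congr rfl
        intro c hc
        simp only [Finset.mem_range] at hc
        congr 2 <;> omega
      rw [h1, Finset.sum_range_succ,
        Finset.sum_range_succ (fun c => (∑ k ∈ Finset.range (M + 1 - c), g k) * p c)]
      have h2 : ∀ c ∈ Finset.range M,
          (∑ k ∈ Finset.range (M + 1 - c), g k) * p c
            = (∑ k ∈ Finset.range (M - c), g k) * p c + g (M - c) * p c := by
        intro c hc
        simp only [Finset.mem_range] at hc
        have : M + 1 - c = (M - c) + 1 := by omega
        rw [this, Finset.sum_range_succ, add_mul]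
      rw [Finset.sum_congr rfl h2, Finset.sum_add_distrib]
      have : M + 1 - M = 1 := by omega
      rw [this]
      simp only [Finset.sum_range_one, Nat.sub_self]
      ring

lemma final_alg (M : ℕ) (E q : ℕ → ℂ) :
    q 0 * ∑ c ∈ Finset.range (M + 1), E c
        - ∑ c ∈ Finset.range M, (q 0 - q (M - c)) * E c
      = ∑ c ∈ Finset.range (M + 1), q (M - c) * E c := by
  rw [Finset.sum_range_succ, Finset.sum_range_succ (fun c => q (M - c) * E c), Nat.sub_self,
    mul_add, Finset.mul_sum]
  have : ∑ c ∈ Finset.range M, (q 0 - q (M - c)) * E c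
      = ∑ c ∈ Finset.range M, q 0 * E c - ∑ c ∈ Finset.range M, q (M - c) * E c := by
    rw [← Finset.sum_sub_distrib]
    exact Finset.sum_congr rfl fun c _ => by ring
  rw [this]
  ring

/-- Evaluation at `w = 1` of the simultaneous Padé polynomials (`j = 0` case),
via the contiguity relation `h^1_j + ⋯ + h^{L-1}_j = h^0_j - h^0_{j+1}`. -/
theorem eval_one_identity_zero (L n : ℕ) (hL : 2 ≤ L) (hn : 0 < n)
    (h : ℕ → ℕ → ℂ)
    (hcont : ∀ j : ℕ, ∑ k ∈ Finset.Ico 1 L, h k j = h 0 j - h 0 (j + 1)) :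
    h 0 0 * Polynomial.eval 1 (P00 L n (hz h)) -
        ∑ l ∈ Finset.Ico 1 L, Polynomial.eval 1
          (PowerSeries.trunc (n * (L - 1))
            ((PowerSeries.mk fun j => h l j) *
              ((P00 L n (hz h) : Polynomial ℂ) : PowerSeries ℂ))) =
      Matrix.det (Matrix.of fun r c : Fin (n * (L - 1) + 1) =>
        if (r : ℕ) = 0 then hz h 0 (((n * (L - 1) : ℕ) : ℤ) - ((c : ℕ) : ℤ))
        else hz h (((r : ℕ) - 1) / n + 1)
          (((n * (L - 1) : ℕ) : ℤ) + (((((r : ℕ) - 1) % n : ℕ)) : ℤ) - ((c : ℕ) : ℤ))) := by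
  classical
  set m : ℕ := n * (L - 1) with hm
  set B : Matrix (Fin (m + 1)) (Fin (m + 1)) ℂ := Matrix.of (fun r c : Fin (m + 1) =>
    if (r : ℕ) = 0 then 0 else hz h (((r : ℕ) - 1) / n + 1)
      (((m : ℕ) : ℤ) + (((((r : ℕ) - 1) % n : ℕ)) : ℤ) - ((c : ℕ) : ℤ))) with hB
  set E : ℕ → ℂ := fun cv =>
    (B.updateRow 0 (fun c' : Fin (m + 1) => if (c' : ℕ) = cv then 1 else 0)).det with hEdef
  -- E vanishes beyond m
  have hEzero : ∀ cv, m + 1 ≤ cv → E cv = 0 := by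
    intro cv hcv
    apply Matrix.det_eq_zero_of_row_eq_zero 0
    intro c'
    rw [Matrix.updateRow_self]
    have := c'.isLt
    rw [if_neg (by omega)]
  -- rewriting arbitrary first rows as updateRow of B
  have hupd : ∀ (v : Fin (m + 1) → ℂ),
      (Matrix.of fun r c : Fin (m + 1) => if (r : ℕ) = 0 then v c else B r c)
        = B.updateRow 0 v := by
    intro v
    ext r c
    rw [Matrix.updateRow_apply]
    by_cases hr : (r : ℕ) = 0
    · rw [Matrix.of_apply, if_pos hr, if_pos (Fin.ext hr)]
    · rw [Matrix.of_apply, if_neg hr, if_neg (fun e => hr (by simp [e]))]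
  -- Step A : P00 as a polynomial with coefficients E
  have hP : P00 L n (hz h) = ∑ c ∈ Finset.range (m + 1),
      Polynomial.C (E c) * Polynomial.X ^ c := by
    rw [P00, ← hm]
    have hmat : (Matrix.of fun r c : Fin (m + 1) =>
        if (r : ℕ) = 0 then (Polynomial.X ^ (c : ℕ) : Polynomial ℂ)
        else Polynomial.C (hz h (((r : ℕ) - 1) / n + 1)
          (((m : ℕ) : ℤ) + (((((r : ℕ) - 1) % n : ℕ)) : ℤ) - ((c : ℕ) : ℤ))))
        = (B.map Polynomial.C).updateRow 0 (fun c : Fin (m + 1) => Polynomial.X ^ (c : ℕ)) := by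
      ext r c
      rw [Matrix.updateRow_apply]
      by_cases hr : (r : ℕ) = 0
      · rw [Matrix.of_apply, if_pos hr, if_pos (Fin.ext hr)]
      · rw [Matrix.of_apply, if_neg hr, if_neg (fun e => hr (by simp [e])),
          Matrix.map_apply, hB, Matrix.of_apply, if_neg hr]
    rw [hmat, expandRow]
    rw [← Fin.sum_univ_eq_sum_range (fun c => Polynomial.C (E c) * Polynomial.X ^ c) (m + 1)]
    apply Finset.sum_congr rfl
    intro cv _
    rw [indcast cv]
    have hmap : (B.map Polynomial.C).updateRow 0
        (fun c' : Fin (m + 1) => if (c' : ℕ) = (cv : ℕ) then (1 : Polynomial ℂ) else 0)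
        = (B.updateRow 0 (fun c' => if (c' : ℕ) = (cv : ℕ) then 1 else 0)).map Polynomial.C := by
      ext r c
      by_cases hr : r = 0 <;>
        simp [hr, Matrix.updateRow_apply, Matrix.map_apply, apply_ite Polynomial.C]
    rw [hmap, ← RingHom.mapMatrix_apply, ← RingHom.map_det]
    have : (B.updateRow 0 fun c' : Fin (m + 1) =>
        if (c' : ℕ) = (cv : ℕ) then (1 : ℂ) else 0).det = E (cv : ℕ) := rfl
    rw [this]
    ring
  -- coefficients of P00
  have hcoeff : ∀ k, (P00 L n (hz h)).coeff k = E k := by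
    intro k
    rw [hP, Polynomial.finset_sum_coeff]
    simp only [Polynomial.coeff_C_mul, Polynomial.coeff_X_pow, mul_ite, mul_one, mul_zero]
    rw [Finset.sum_ite_eq (Finset.range (m + 1)) k E]
    by_cases hk : k < m + 1
    · rw [if_pos (Finset.mem_range.2 hk)]
    · rw [if_neg (fun hh => hk (Finset.mem_range.1 hh)), hEzero k (by omega)]
  -- evaluation of P00 at 1
  have hev : Polynomial.eval 1 (P00 L n (hz h)) = ∑ c ∈ Finset.range (m + 1), E c := by
    rw [hP, Polynomial.eval_finset_sum]
    simp
  -- middle terms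
  have hmid : ∀ l, Polynomial.eval 1 (PowerSeries.trunc m
      ((PowerSeries.mk fun j => h l j) * ((P00 L n (hz h) : Polynomial ℂ) : PowerSeries ℂ)))
      = ∑ j ∈ Finset.range m, ∑ k ∈ Finset.range (j + 1), h l k * E (j - k) := by
    intro l
    rw [PowerSeries.trunc_apply, ← Finset.range_eq_Ico, Polynomial.eval_finset_sum]
    apply Finset.sum_congr rfl
    intro j _
    rw [Polynomial.eval_monomial, one_pow, mul_one, PowerSeries.coeff_mul,
      Finset.Nat.sum_antidiagonal_eq_sum_range_succ_mk]
    apply Finset.sum_congr rfl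
    intro k _
    rw [PowerSeries.coeff_mk, Polynomial.coeff_coe, hcoeff]
  -- Step B : the right-hand side determinant
  have hR : Matrix.det (Matrix.of fun r c : Fin (m + 1) =>
      if (r : ℕ) = 0 then hz h 0 (((m : ℕ) : ℤ) - ((c : ℕ) : ℤ))
      else hz h (((r : ℕ) - 1) / n + 1)
        (((m : ℕ) : ℤ) + (((((r : ℕ) - 1) % n : ℕ)) : ℤ) - ((c : ℕ) : ℤ)))
      = ∑ c ∈ Finset.range (m + 1), h 0 (m - c) * E c := by
    have hmat : (Matrix.of fun r c : Fin (m + 1) =>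
        if (r : ℕ) = 0 then hz h 0 (((m : ℕ) : ℤ) - ((c : ℕ) : ℤ))
        else hz h (((r : ℕ) - 1) / n + 1)
          (((m : ℕ) : ℤ) + (((((r : ℕ) - 1) % n : ℕ)) : ℤ) - ((c : ℕ) : ℤ)))
        = B.updateRow 0 (fun c : Fin (m + 1) => hz h 0 (((m : ℕ) : ℤ) - ((c : ℕ) : ℤ))) := by
      rw [← hupd]
      ext r c
      rw [Matrix.of_apply, Matrix.of_apply]
      by_cases hr : (r : ℕ) = 0
      · rw [if_pos hr, if_pos hr]
      · rw [if_neg hr, if_neg hr, hB, Matrix.of_apply, if_neg hr]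
    rw [hmat, expandRow]
    rw [← Fin.sum_univ_eq_sum_range (fun c => h 0 (m - c) * E c) (m + 1)]
    apply Finset.sum_congr rfl
    intro cv _
    rw [indcast cv]
    have : (B.updateRow 0 fun c' : Fin (m + 1) =>
        if (c' : ℕ) = (cv : ℕ) then (1 : ℂ) else 0).det = E (cv : ℕ) := rfl
    rw [this]
    congr 1
    have hlt := cv.isLt
    rw [hz, if_pos (by omega)]
    congr 1
    omega
  -- put everything together
  rw [hev, hR, Finset.sum_congr rfl (fun l _ => hmid l)]
  have hswap : ∑ l ∈ Finset.Ico 1 L, ∑ j ∈ Finset.range m, ∑ k ∈ Finset.range (j + 1),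
      h l k * E (j - k)
      = ∑ j ∈ Finset.range m, ∑ k ∈ Finset.range (j + 1), (h 0 k - h 0 (k + 1)) * E (j - k) := by
    rw [Finset.sum_comm]
    apply Finset.sum_congr rfl
    intro j _
    rw [Finset.sum_comm]
    apply Finset.sum_congr rfl
    intro k _
    rw [← Finset.sum_mul, hcont k]
  rw [hswap, conv_sum]
  have htel : ∀ c ∈ Finset.range m,
      (∑ k ∈ Finset.range (m - c), (h 0 k - h 0 (k + 1))) * E c
        = (h 0 0 - h 0 (m - c)) * E c := by
    intro c _
    rw [Finset.sum_range_sub' (h 0)]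
  rw [Finset.sum_congr rfl htel]
  exact final_alg m E (h 0)
end
end

section
/- Let L ≥ 2, n ≥ 1, m = n(L−1), fix k with 1 ≤ k ≤ L−1, and let {h^l_j}_{j≥0} ⊂ ℂ (0 ≤ l ≤ L−1) be sequences satisfying the contiguity relation h^1_j + h^2_j + ⋯ + h^{L−1}_j = h^0_j − h^0_{j+1} for all j ≥ 0. Set f_l(w) := Σ_{j≥0} h^l_j w^j for 1 ≤ l ≤ L−1. Define P_0(w) := det of the m×m matrix with first row (1, w, …, w^{m−1}) and remaining rows the stacked blocks A^1_m(n,m), …, A^{k−1}_m(n,m), A^k_m(n−1,m), A^{k+1}_{m−1}(n,m), …, A^{L−1}_{m−1}(n,m), and P_l(w) := [f_l·P_0]_0^{m−1} for 1 ≤ l ≤ L−1. Then h^0_0·P_0(1) − Σ_{l=1}^{L−1} P_l(1) = det of the m×m matrix with first row (h^0_m, h^0_{m−1}, …, h^0_1) and remaining rows the stacked blocks A^1_m(n,m), …, A^{k−1}_m(n,m), A^k_m(n−1,m), A^{k+1}_{m−1}(n,m), …, A^{L−1}_{m−1}(n,m). -/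
noncomputable section

/-- `P_0^{(k)}(w)` for `1 ≤ k ≤ L-1`: the determinant of the `m × m` matrix with first
row `(1, w, …, w^{m-1})` and remaining rows the stacked blocks
`A^1_m(n,m), …, A^{k-1}_m(n,m), A^k_m(n-1,m), A^{k+1}_{m-1}(n,m), …, A^{L-1}_{m-1}(n,m)`. -/
def P0k (L n k : ℕ) (a : ℕ → ℤ → ℂ) : Polynomial ℂ :=
  Matrix.det (Matrix.of fun r c : Fin (n * (L - 1)) =>
    if (r : ℕ) = 0 then Polynomial.X ^ (c : ℕ)
    else Polynomial.C (stackJ n k (n * (L - 1)) a ((r : ℕ) - 1) (c : ℕ)))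

open Matrix Polynomial in
private lemma det_updateRow_fsum {R : Type*} [CommRing R] {m : ℕ}
    (A : Matrix (Fin m) (Fin m) R) (j : Fin m) {ι : Type*} (s : Finset ι)
    (v : ι → Fin m → R) :
    (A.updateRow j (∑ i ∈ s, v i)).det = ∑ i ∈ s, (A.updateRow j (v i)).det := by
  classical
  induction s using Finset.induction_on with
  | empty =>
      have h0 : (∑ i ∈ (∅ : Finset ι), v i) = (0 : R) • (fun _ => (0 : R)) := by simp
      rw [h0, Matrix.det_updateRow_smul, zero_mul, Finset.sum_empty]
  | insert _ _ hmem ih =>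
      rw [Finset.sum_insert hmem, Matrix.det_updateRow_add, ih, Finset.sum_insert hmem]

open Matrix Polynomial in
private lemma det_row_expand {R : Type*} [CommRing R] {m : ℕ}
    (A : Matrix (Fin m) (Fin m) R) (j : Fin m) (v : Fin m → R) :
    (A.updateRow j v).det = ∑ i, v i * (A.updateRow j (Pi.single i 1)).det := by
  classical
  have hv : v = ∑ i, Pi.single i (v i) := by
    funext c
    simp [Finset.sum_apply, Pi.single_apply]
  conv_lhs => rw [hv]
  rw [det_updateRow_fsum]
  refine Finset.sum_congr rfl fun i _ => ?_
  have hs : Pi.single i (v i) = v i • (Pi.single i (1 : R) : Fin m → R) := by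
    funext c
    by_cases hc : c = i <;> simp [Pi.single_apply, hc]
  rw [hs, Matrix.det_updateRow_smul]

/-- Evaluation at `w = 1` of the simultaneous Padé polynomials (`k ≥ 1` case),
via the contiguity relation `h^1_j + ⋯ + h^{L-1}_j = h^0_j - h^0_{j+1}`. -/
theorem eval_one_identity_k (L n : ℕ) (hL : 2 ≤ L) (hn : 0 < n)
    (k : ℕ) (hk1 : 1 ≤ k) (hk : k < L)
    (h : ℕ → ℕ → ℂ)
    (hcont : ∀ j : ℕ, ∑ l ∈ Finset.Ico 1 L, h l j = h 0 j - h 0 (j + 1)) :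
    h 0 0 * Polynomial.eval 1 (P0k L n k (hz h)) -
        ∑ l ∈ Finset.Ico 1 L, Polynomial.eval 1
          (PowerSeries.trunc (n * (L - 1))
            ((PowerSeries.mk fun j => h l j) *
              ((P0k L n k (hz h) : Polynomial ℂ) : PowerSeries ℂ))) =
      Matrix.det (Matrix.of fun r c : Fin (n * (L - 1)) =>
        if (r : ℕ) = 0 then hz h 0 (((n * (L - 1) : ℕ) : ℤ) - ((c : ℕ) : ℤ))
        else stackJ n k (n * (L - 1)) (hz h) ((r : ℕ) - 1) (c : ℕ)) := by
  classical
  set m := n * (L - 1) with hmdef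
  have hm : 0 < m := Nat.mul_pos hn (by omega)
  set i0 : Fin m := ⟨0, hm⟩ with hi0
  set B : Matrix (Fin m) (Fin m) ℂ := Matrix.of
    (fun r c : Fin m => if (r : ℕ) = 0 then 0
      else stackJ n k m (hz h) ((r : ℕ) - 1) (c : ℕ)) with hBdef
  have hB : ∀ v : Fin m → ℂ,
      (Matrix.of fun r c : Fin m => if (r : ℕ) = 0 then v c
        else stackJ n k m (hz h) ((r : ℕ) - 1) (c : ℕ)) = B.updateRow i0 v := by
    intro v
    ext r c
    by_cases hr : r = i0
    · subst hr; simp [hBdef, hi0]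
    · have hr' : (r : ℕ) ≠ 0 := by
        intro hh; exact hr (Fin.ext (by simpa [hi0] using hh))
      simp [hBdef, Matrix.updateRow_apply, hr, hr']
  set d : Fin m → ℂ := fun i => (B.updateRow i0 (Pi.single i 1)).det with hd
  -- structure of P0k
  have hBpoly : (Matrix.of fun r c : Fin m =>
      if (r : ℕ) = 0 then (Polynomial.X : Polynomial ℂ) ^ (c : ℕ)
      else Polynomial.C (stackJ n k m (hz h) ((r : ℕ) - 1) (c : ℕ)))
      = (B.map Polynomial.C).updateRow i0 (fun c => Polynomial.X ^ (c : ℕ)) := by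
    ext r c
    by_cases hr : r = i0
    · subst hr; simp [hi0]
    · have hr' : (r : ℕ) ≠ 0 := by
        intro hh; exact hr (Fin.ext (by simpa [hi0] using hh))
      simp [hBdef, Matrix.updateRow_apply, Matrix.map_apply, hr, hr']
  have step1 : P0k L n k (hz h) = ∑ i : Fin m, Polynomial.X ^ (i : ℕ) * Polynomial.C (d i) := by
    rw [P0k, ← hmdef, hBpoly, det_row_expand]
    refine Finset.sum_congr rfl fun i _ => ?_
    congr 1
    have hps : Pi.single i (1 : Polynomial ℂ) = Polynomial.C ∘ Pi.single i (1 : ℂ) := by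
      funext c
      by_cases hc : c = i <;> simp [Pi.single_apply, hc]
    rw [hps, ← Matrix.map_updateRow, hd]
    rw [← RingHom.mapMatrix_apply, ← RingHom.map_det]
  have step2 : Polynomial.eval 1 (P0k L n k (hz h)) = ∑ i : Fin m, d i := by
    rw [step1, Polynomial.eval_finset_sum]
    simp
  -- coercion to power series
  have hcoe : ((P0k L n k (hz h) : Polynomial ℂ) : PowerSeries ℂ)
      = ∑ i : Fin m, (PowerSeries.X : PowerSeries ℂ) ^ (i : ℕ) * PowerSeries.C (d i) := by
    rw [step1, ← Polynomial.coeToPowerSeries.ringHom_apply, map_sum]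
    refine Finset.sum_congr rfl fun i _ => ?_
    rw [map_mul, map_pow, Polynomial.coeToPowerSeries.ringHom_apply,
      Polynomial.coeToPowerSeries.ringHom_apply, Polynomial.coe_X, Polynomial.coe_C]
  -- evaluation of truncation
  have evalTrunc : ∀ F : PowerSeries ℂ,
      Polynomial.eval 1 (PowerSeries.trunc m F)
        = ∑ j ∈ Finset.range m, PowerSeries.coeff j F := by
    intro F
    rw [PowerSeries.trunc_apply, Polynomial.eval_finset_sum]
    simp [Polynomial.eval_monomial]
  have step5 : ∀ (l j : ℕ),
      PowerSeries.coeff j ((PowerSeries.mk fun a => h l a) *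
          ((P0k L n k (hz h) : Polynomial ℂ) : PowerSeries ℂ))
        = ∑ i : Fin m, (if (i : ℕ) ≤ j then h l (j - (i : ℕ)) else 0) * d i := by
    intro l j
    rw [hcoe, Finset.mul_sum, map_sum]
    refine Finset.sum_congr rfl fun i _ => ?_
    rw [← mul_assoc, PowerSeries.coeff_mul_C, PowerSeries.coeff_mul_X_pow']
    by_cases hij : (i : ℕ) ≤ j <;> simp [hij, PowerSeries.coeff_mk]
  have hinner : ∀ (l : ℕ) (i : Fin m),
      (∑ j ∈ Finset.range m, if (i : ℕ) ≤ j then h l (j - (i : ℕ)) else 0)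
        = ∑ a ∈ Finset.range (m - (i : ℕ)), h l a := by
    intro l i
    have hfil : (Finset.range m).filter (fun j => (i : ℕ) ≤ j) = Finset.Ico (i : ℕ) m := by
      ext j
      simp only [Finset.mem_filter, Finset.mem_range, Finset.mem_Ico]
      omega
    rw [← Finset.sum_filter, hfil, Finset.sum_Ico_eq_sum_range]
    simp
  have step6 : ∀ l : ℕ,
      Polynomial.eval 1 (PowerSeries.trunc m ((PowerSeries.mk fun a => h l a) *
          ((P0k L n k (hz h) : Polynomial ℂ) : PowerSeries ℂ)))
        = ∑ i : Fin m, (∑ a ∈ Finset.range (m - (i : ℕ)), h l a) * d i := by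
    intro l
    rw [evalTrunc]
    simp_rw [step5]
    rw [Finset.sum_comm]
    refine Finset.sum_congr rfl fun i _ => ?_
    rw [← Finset.sum_mul, hinner]
  have step7 : (∑ l ∈ Finset.Ico 1 L, Polynomial.eval 1
      (PowerSeries.trunc m ((PowerSeries.mk fun a => h l a) *
        ((P0k L n k (hz h) : Polynomial ℂ) : PowerSeries ℂ))))
      = ∑ i : Fin m, (h 0 0 - h 0 (m - (i : ℕ))) * d i := by
    simp_rw [step6]
    rw [Finset.sum_comm]
    refine Finset.sum_congr rfl fun i _ => ?_
    rw [← Finset.sum_mul]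
    congr 1
    rw [Finset.sum_comm]
    have : ∀ a ∈ Finset.range (m - (i : ℕ)),
        (∑ l ∈ Finset.Ico 1 L, h l a) = h 0 a - h 0 (a + 1) := fun a _ => hcont a
    rw [Finset.sum_congr rfl this, Finset.sum_range_sub' (fun a => h 0 a)]
  -- the right-hand side determinant
  have hR : Matrix.det (Matrix.of fun r c : Fin m =>
      if (r : ℕ) = 0 then hz h 0 ((m : ℤ) - ((c : ℕ) : ℤ))
      else stackJ n k m (hz h) ((r : ℕ) - 1) (c : ℕ))
      = ∑ i : Fin m, h 0 (m - (i : ℕ)) * d i := by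
    rw [hB (fun c => hz h 0 ((m : ℤ) - ((c : ℕ) : ℤ))), det_row_expand]
    refine Finset.sum_congr rfl fun i _ => ?_
    congr 1
    have h1 : (0 : ℤ) ≤ (m : ℤ) - ((i : ℕ) : ℤ) := by
      have := i.isLt; omega
    have h2 : ((m : ℤ) - ((i : ℕ) : ℤ)).toNat = m - (i : ℕ) := by omega
    simp [hz, h1, h2]
  calc h 0 0 * Polynomial.eval 1 (P0k L n k (hz h)) -
        ∑ l ∈ Finset.Ico 1 L, Polynomial.eval 1
          (PowerSeries.trunc m ((PowerSeries.mk fun j => h l j) *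
              ((P0k L n k (hz h) : Polynomial ℂ) : PowerSeries ℂ)))
      = h 0 0 * (∑ i : Fin m, d i) - ∑ i : Fin m, (h 0 0 - h 0 (m - (i : ℕ))) * d i := by
        rw [step2, step7]
    _ = ∑ i : Fin m, h 0 (m - (i : ℕ)) * d i := by
        rw [Finset.mul_sum, ← Finset.sum_sub_distrib]
        refine Finset.sum_congr rfl fun i _ => ?_
        ring
    _ = _ := hR.symm
end
end
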